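/- arXiv:1004.4552 — 3 statements merged into one kernel-verified Lean document; each statement's English description precedes it below -/
import Mathlib

section
/- Let A be an m × n totally unimodular matrix with real entries, let b ∈ ℤᵐ, and let P := {x ∈ ℝⁿ | Ax ≤ b}. Then P has the Integer Carathéodory Property. -/
open Finset Pointwise

variable {ι : Type*} [Fintype ι]

/-- A vector is an integer vector if each coordinate is an integer. -/
def IsIntegerVec (x : ι → ℝ) : Prop := ∀ i, ∃ z : ℤ, x i = (z : ℝ)

/-- `F` is a (nonempty, exposed) face of `P`: the set of points of `P` maximizing some
linear functional `⟨c, ·⟩` over `P`. -/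
def IsFace (P F : Set (ι → ℝ)) : Prop :=
  F.Nonempty ∧ ∃ c : ι → ℝ, F = {x ∈ P | ∀ y ∈ P, ∑ i, c i * y i ≤ ∑ i, c i * x i}

/-- `P` is an integer polyhedron: every (nonempty) face contains an integer vector. -/
def IsIntegerPolyhedron (P : Set (ι → ℝ)) : Prop :=
  ∀ F : Set (ι → ℝ), IsFace P F → ∃ x ∈ F, IsIntegerVec x

/-- `Q` is box-integer: its intersection with any integer box is an integer polyhedron. -/
def IsBoxInteger (Q : Set (ι → ℝ)) : Prop :=
  ∀ c d : ι → ℤ, (∀ i, c i ≤ d i) →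
    IsIntegerPolyhedron {x ∈ Q | ∀ i, (c i : ℝ) ≤ x i ∧ x i ≤ (d i : ℝ)}

/-- Condition (★): for all `0 ≤ r ≤ k` and integer `w`, the set `rP ∩ (w - (k-r)P)`
is box-integer. -/
def ConditionStar (P : Set (ι → ℝ)) : Prop :=
  ∀ k r : ℕ, r ≤ k → ∀ w : ι → ℤ,
    IsBoxInteger (((r : ℝ) • P) ∩
      ((fun y => (fun i => (w i : ℝ)) - y) '' (((k - r : ℕ) : ℝ) • P)))

/-- A rational polyhedron: `{x | Ax ≤ b}` for a rational matrix `A` and rational `b`. -/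
def IsRationalPolyhedron {n : ℕ} (P : Set (Fin n → ℝ)) : Prop :=
  ∃ (m : ℕ) (A : Matrix (Fin m) (Fin n) ℚ) (b : Fin m → ℚ),
    P = {x | ∀ i, ∑ j, (A i j : ℝ) * x j ≤ (b i : ℝ)}

/-- The Integer Carathéodory Property: every integer vector `w ∈ kP` is a nonnegative
integer combination, with coefficients summing to `k`, of affinely independent integer
vectors in `P`. -/
def HasICP (P : Set (ι → ℝ)) : Prop :=
  ∀ k : ℕ, 0 < k → ∀ w : ι → ℤ, (fun i => (w i : ℝ)) ∈ (k : ℝ) • P →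
    ∃ (t : ℕ) (x : Fin t → (ι → ℝ)) (c : Fin t → ℕ),
      (∀ i, x i ∈ P) ∧ (∀ i, IsIntegerVec (x i)) ∧ AffineIndependent ℝ x ∧
      (∀ i, 0 < c i) ∧ (∑ i, c i = k) ∧ (fun j => (w j : ℝ)) = ∑ i, (c i : ℝ) • x i


namespace TUICP

open Matrix Finset

open Matrix

lemma signType_cast_int (a : ℝ) (h : a ∈ Set.range (SignType.cast : SignType → ℝ)) :
    ∃ z : ℤ, a = (z : ℝ) := by
  obtain ⟨s, rfl⟩ := h
  cases s
  · exact ⟨0, by simp⟩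
  · exact ⟨-1, by simp⟩
  · exact ⟨1, by simp⟩

lemma signType_range_mul {a b : ℝ} (ha : a ∈ Set.range (SignType.cast : SignType → ℝ))
    (hb : b ∈ Set.range (SignType.cast : SignType → ℝ)) :
    a * b ∈ Set.range (SignType.cast : SignType → ℝ) := by
  obtain ⟨s, rfl⟩ := ha
  obtain ⟨t, rfl⟩ := hb
  exact ⟨s * t, by push_cast; ring⟩

lemma tu_entry_int {q r : Type*} {M : Matrix q r ℝ} (hM : M.IsTotallyUnimodular) (i : q) (j : r) :
    ∃ z : ℤ, M i j = (z : ℝ) :=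
  signType_cast_int _ (hM.apply i j)

lemma tu_det_pm_one {k : ℕ} {M : Matrix (Fin k) (Fin k) ℝ}
    (h : M.det ∈ Set.range (SignType.cast : SignType → ℝ))
    (hne : M.det ≠ 0) : M.det = 1 ∨ M.det = -1 := by
  obtain ⟨s, hs⟩ := h
  cases s
  · exact absurd hs.symm (by simpa using hne)
  · right; rw [← hs]; simp
  · left; rw [← hs]; simp

/-- Stacking `A` and `-A` preserves total unimodularity. -/
lemma tu_fromRows_neg {m' n' : Type*} {A : Matrix m' n' ℝ} [Fintype n'] [DecidableEq n']
    (hA : A.IsTotallyUnimodular) :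
    (fromRows A (-A)).IsTotallyUnimodular := by
  rw [isTotallyUnimodular_iff]
  intro k f g
  have key : (fromRows A (-A)).submatrix f g =
      Matrix.of fun a b => (fun a => Sum.elim (fun _ => (1:ℝ)) (fun _ => (-1:ℝ)) (f a)) a *
        (A.submatrix (fun a => Sum.elim id id (f a)) g) a b := by
    ext a b
    cases hfa : f a <;> simp [hfa, Matrix.submatrix, Matrix.fromRows_apply_inl, Matrix.fromRows_apply_inr]
  rw [key, Matrix.det_mul_column]
  apply signType_range_mul
  · apply Finset.prod_induction _ (· ∈ Set.range (SignType.cast : SignType → ℝ))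
      (fun _ _ => signType_range_mul) ⟨1, by simp⟩
    intro a _
    cases hfa : f a
    · exact ⟨1, by simp [hfa]⟩
    · exact ⟨-1, by simp [hfa]⟩
  · rw [Matrix.isTotallyUnimodular_iff] at hA
    exact hA k _ g

/-- Stacking with `±` identity rows preserves total unimodularity. -/
lemma tu_unit_rows {m' : Type*} {n : ℕ} {A : Matrix m' (Fin n) ℝ} (hA : A.IsTotallyUnimodular)
    {q : Type*} (B : Matrix q (Fin n) ℝ)
    (hB : ∀ i : q, ∃ j : Fin n, ∃ s : SignType, B i = Pi.single j s.cast) :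
    (fromRows A B).IsTotallyUnimodular :=
  hA.fromRows_unitlike (fun _ => hB)


open Matrix Finset

lemma vecMul_apply' {q : Type*} [Fintype q] {n : ℕ} (v : q → ℝ) (N : Matrix q (Fin n) ℝ)
    (j : Fin n) : vecMul v N j = ∑ a, v a * N a j := by
  simp [vecMul, dotProduct]

lemma mulVec_apply' {q : Type*} [Fintype q] {n : ℕ} (N : Matrix q (Fin n) ℝ)
    (x : Fin n → ℝ) (i : q) : N.mulVec x i = ∑ j, N i j * x j := by
  simp [mulVec, dotProduct]

lemma snoc_inj {N : ℕ} {β : Type*} {f : Fin N → β} {i : β} (hf : Function.Injective f)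
    (hi : ∀ a, f a ≠ i) : Function.Injective (Fin.snoc f i : Fin (N+1) → β) := by
  intro a b hab
  rcases Fin.eq_castSucc_or_eq_last a with ⟨a', rfl⟩ | rfl <;>
    rcases Fin.eq_castSucc_or_eq_last b with ⟨b', rfl⟩ | rfl
  · rw [Fin.snoc_castSucc, Fin.snoc_castSucc] at hab
    exact congrArg _ (hf hab)
  · rw [Fin.snoc_castSucc, Fin.snoc_last] at hab
    exact absurd hab (hi a')
  · rw [Fin.snoc_castSucc, Fin.snoc_last] at hab
    exact absurd hab.symm (hi b')
  · rfl

lemma signType_cast_int' (a : ℝ) (h : a ∈ Set.range (SignType.cast : SignType → ℝ)) :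
    ∃ z : ℤ, a = (z : ℝ) := by
  obtain ⟨s, rfl⟩ := h
  cases s
  · exact ⟨0, by simp⟩
  · exact ⟨-1, by simp⟩
  · exact ⟨1, by simp⟩

lemma tu_det_pm_one' {k : ℕ} {M : Matrix (Fin k) (Fin k) ℝ}
    (h : M.det ∈ Set.range (SignType.cast : SignType → ℝ))
    (hne : M.det ≠ 0) : M.det = 1 ∨ M.det = -1 := by
  obtain ⟨s, hs⟩ := h
  cases s
  · exact absurd hs.symm (by simpa using hne)
  · right; rw [← hs]; simp
  · left; rw [← hs]; simp

/-- A totally unimodular real equality system with integer right-hand side that has a real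
solution also has an integer solution. -/
lemma tu_eq_int_solution {q : Type*} [Fintype q] {n : ℕ}
    (M : Matrix q (Fin n) ℝ) (hM : M.IsTotallyUnimodular)
    (d : q → ℝ) (hd : ∀ i, ∃ z : ℤ, d i = (z : ℝ))
    (x : Fin n → ℝ) (hx : ∀ i, M.mulVec x i = d i) :
    ∃ y : Fin n → ℝ, (∀ j, ∃ z : ℤ, y j = (z : ℝ)) ∧ ∀ i, M.mulVec y i = d i := by
  classical
  set Q : ℕ → Prop := fun s => ∃ f : Fin s → q, ∃ g : Fin s → Fin n,
    Function.Injective f ∧ Function.Injective g ∧ (M.submatrix f g).det ≠ 0 with hQdef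
  have hQ0 : Q 0 := by
    refine ⟨Fin.elim0, Fin.elim0, fun a => a.elim0, fun a => a.elim0, ?_⟩
    rw [Matrix.det_fin_zero]; norm_num
  have hQle : ∀ s, Q s → s ≤ n := by
    rintro s ⟨f, g, hf, hg, _⟩
    simpa using Fintype.card_le_of_injective g hg
  set s₀ : ℕ := Nat.findGreatest Q n with hs₀def
  have hQs : Q s₀ := Nat.findGreatest_spec (Nat.zero_le n) hQ0
  have hmax : ∀ s', Q s' → s' ≤ s₀ := by
    intro s' h
    by_contra hc
    push_neg at hc
    exact Nat.findGreatest_is_greatest hc (hQle s' h) h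
  obtain ⟨f, g, hf, hg, hdet⟩ := hQs
  set B : Matrix (Fin s₀) (Fin s₀) ℝ := M.submatrix f g with hBdef
  have hu : IsUnit B.det := isUnit_iff_ne_zero.mpr hdet
  set α : q → Fin s₀ → ℝ := fun i => vecMul (fun a => M i (g a)) B⁻¹ with hαdef
  have hα : ∀ i, vecMul (α i) B = fun a => M i (g a) := by
    intro i
    rw [hαdef, vecMul_vecMul, Matrix.nonsing_inv_mul B hu, vecMul_one]
  -- key representation of every row of M as a combination of the chosen rows
  have KEY : ∀ i : q, ∀ j : Fin n, M i j = ∑ a, α i a * M (f a) j := by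
    intro i
    by_contra hcon
    push_neg at hcon
    obtain ⟨j₀, hj₀⟩ := hcon
    have hj₀g : ∀ a₀ : Fin s₀, g a₀ ≠ j₀ := by
      intro a₀ hga
      apply hj₀
      rw [← hga]
      have h1 := congrFun (hα i) a₀
      rw [vecMul_apply'] at h1
      simpa [hBdef, Matrix.submatrix] using h1.symm
    have hfi : ∀ a₁ : Fin s₀, f a₁ ≠ i := by
      intro a₁ hfa
      have h2 : vecMul (Pi.single a₁ (1:ℝ)) B = fun a => M i (g a) := by
        funext a₀
        rw [vecMul_apply']
        rw [Finset.sum_eq_single a₁]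
        · simp [hBdef, Matrix.submatrix, hfa]
        · intro b _ hb; simp [Pi.single_eq_of_ne hb]
        · intro h; exact absurd (Finset.mem_univ a₁) h
      have hsingle : α i = Pi.single a₁ (1:ℝ) := by
        calc α i = vecMul (vecMul (Pi.single a₁ (1:ℝ)) B) B⁻¹ := by rw [h2]
          _ = Pi.single a₁ (1:ℝ) := by
              rw [vecMul_vecMul, Matrix.mul_nonsing_inv B hu, vecMul_one]
      apply hj₀
      rw [hsingle]
      rw [Finset.sum_eq_single a₁]
      · simp [hfa]
      · intro b _ hb; simp [Pi.single_eq_of_ne hb]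
      · intro h; exact absurd (Finset.mem_univ a₁) h
    -- extended pair of injections
    set f' : Fin (s₀+1) → q := Fin.snoc f i with hf'def
    set g' : Fin (s₀+1) → Fin n := Fin.snoc g j₀ with hg'def
    have hf' : Function.Injective f' := snoc_inj hf hfi
    have hg' : Function.Injective g' := snoc_inj hg hj₀g
    have hdet' : (M.submatrix f' g').det ≠ 0 := by
      rw [Ne, ← Matrix.exists_vecMul_eq_zero_iff]
      rintro ⟨μ, hμne, hμ⟩
      set μ' : Fin s₀ → ℝ := fun a => μ a.castSucc with hμ'def
      set β : ℝ := μ (Fin.last s₀) with hβdef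
      have hcol : ∀ a₀ : Fin s₀, vecMul μ' B a₀ + β * M i (g a₀) = 0 := by
        intro a₀
        have h1 := congrFun hμ (a₀.castSucc)
        rw [vecMul_apply', Fin.sum_univ_castSucc] at h1
        simp only [Matrix.submatrix_apply, hf'def, hg'def, Fin.snoc_castSucc, Fin.snoc_last] at h1
        rw [vecMul_apply']
        simpa [hBdef, Matrix.submatrix, hμ'def, hβdef] using h1
      have hsum0 : vecMul (μ' + β • α i) B = 0 := by
        funext a₀
        have h2 : vecMul (β • α i) B a₀ = β * M i (g a₀) := by
          rw [vecMul_apply']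
          have h3 := congrFun (hα i) a₀
          rw [vecMul_apply'] at h3
          rw [← h3, Finset.mul_sum]
          apply Finset.sum_congr rfl
          intro b _
          simp [mul_assoc]
        have h4 : vecMul (μ' + β • α i) B a₀ = vecMul μ' B a₀ + vecMul (β • α i) B a₀ := by
          rw [vecMul_apply', vecMul_apply', vecMul_apply', ← Finset.sum_add_distrib]
          apply Finset.sum_congr rfl
          intro b _
          simp [add_mul]
        rw [h4, h2, hcol a₀]
        rfl
      have h0 : μ' + β • α i = 0 := by
        have h5 : μ' + β • α i = vecMul (vecMul (μ' + β • α i) B) B⁻¹ := by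
          rw [vecMul_vecMul, Matrix.mul_nonsing_inv B hu, vecMul_one]
        rw [h5, hsum0, Matrix.zero_vecMul]
      have hμ'eq : ∀ a, μ' a = -(β * α i a) := by
        intro a
        have := congrFun h0 a
        simp only [Pi.add_apply, Pi.smul_apply, smul_eq_mul, Pi.zero_apply] at this
        linarith
      have hlast : ∑ a, μ' a * M (f a) j₀ + β * M i j₀ = 0 := by
        have h1 := congrFun hμ (Fin.last s₀)
        rw [vecMul_apply', Fin.sum_univ_castSucc] at h1
        simpa [hf'def, hg'def, Fin.snoc_castSucc, Fin.snoc_last, μ', β] using h1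
      have hβ0 : β = 0 := by
        by_contra hβne
        apply hj₀
        have h6 : ∑ a, μ' a * M (f a) j₀ = -(β * ∑ a, α i a * M (f a) j₀) := by
          rw [Finset.mul_sum, ← Finset.sum_neg_distrib]
          apply Finset.sum_congr rfl
          intro a _
          rw [hμ'eq a]; ring
        rw [h6] at hlast
        have h7 : β * (M i j₀ - ∑ a, α i a * M (f a) j₀) = 0 := by linarith
        rcases mul_eq_zero.mp h7 with h | h
        · exact absurd h hβne
        · linarith
      have hμ0 : μ = 0 := by
        funext a
        rcases Fin.eq_castSucc_or_eq_last a with ⟨a', rfl⟩ | rfl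
        · have := hμ'eq a'
          rw [hβ0] at this
          simpa [μ'] using this
        · simpa [β] using hβ0
      exact hμne hμ0
    have hQs1 : Q (s₀ + 1) := ⟨f', g', hf', hg', hdet'⟩
    have := hmax _ hQs1
    omega
  -- construct the integer solution
  have hBint : ∀ a b, ∃ z : ℤ, B a b = (z : ℝ) := by
    intro a b
    obtain ⟨z, hz⟩ := signType_cast_int' _ ((hM.submatrix f g).apply a b)
    exact ⟨z, hz⟩
  set B₀ : Matrix (Fin s₀) (Fin s₀) ℤ := fun a b => (hBint a b).choose with hB₀def
  have hB₀ : ∀ a b, ((B₀ a b : ℤ) : ℝ) = B a b := fun a b => ((hBint a b).choose_spec).symm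
  have hmapB : B₀.map ⇑(Int.castRingHom ℝ) = B := by
    ext a b; simp [Matrix.map, hB₀]
  have hdetB₀ : ((B₀.det : ℤ) : ℝ) = B.det := by
    have h := RingHom.map_det (Int.castRingHom ℝ) B₀
    rw [RingHom.mapMatrix_apply, hmapB] at h
    simpa using h
  have hdet₀pm : B₀.det = 1 ∨ B₀.det = -1 := by
    have hrange : B.det ∈ Set.range (SignType.cast : SignType → ℝ) := by
      have := (hM.submatrix f g)
      rw [Matrix.isTotallyUnimodular_iff] at this
      simpa [hBdef] using this s₀ id id
    rcases tu_det_pm_one' hrange hdet with h | h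
    · left; have : ((B₀.det : ℤ) : ℝ) = ((1:ℤ):ℝ) := by rw [hdetB₀, h]; norm_num
      exact_mod_cast this
    · right; have : ((B₀.det : ℤ) : ℝ) = ((-1:ℤ):ℝ) := by rw [hdetB₀, h]; norm_num
      exact_mod_cast this
  set ε : ℤ := B₀.det with hεdef
  have hε2 : ε * ε = 1 := by rcases hdet₀pm with h | h <;> rw [h] <;> norm_num
  set d₀ : q → ℤ := fun i => (hd i).choose with hd₀def
  have hd₀ : ∀ i, ((d₀ i : ℤ) : ℝ) = d i := fun i => ((hd i).choose_spec).symm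
  set yC : Fin s₀ → ℤ := ε • (B₀.adjugate.mulVec (fun c => d₀ (f c))) with hyCdef
  have hyC : B₀.mulVec yC = fun c => d₀ (f c) := by
    rw [hyCdef, Matrix.mulVec_smul, Matrix.mulVec_mulVec, Matrix.mul_adjugate]
    funext c
    simp only [Matrix.smul_mulVec, Matrix.one_mulVec, Pi.smul_apply, smul_eq_mul, ← hεdef]
    rw [← mul_assoc, hε2, one_mul]
  set y₀ : Fin n → ℤ := fun j => if h : ∃ a, g a = j then yC h.choose else 0 with hy₀def
  set y : Fin n → ℝ := fun j => ((y₀ j : ℤ) : ℝ) with hydef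
  have hyg : ∀ b : Fin s₀, y (g b) = ((yC b : ℤ) : ℝ) := by
    intro b
    have hex : ∃ a, g a = g b := ⟨b, rfl⟩
    have : hex.choose = b := hg hex.choose_spec
    simp [hydef, hy₀def, dif_pos hex, this]
  have hyzero : ∀ j : Fin n, (∀ a, g a ≠ j) → y j = 0 := by
    intro j hj
    have : ¬ ∃ a, g a = j := by rintro ⟨a, ha⟩; exact hj a ha
    simp [hydef, hy₀def, dif_neg this]
  have hyrows : ∀ a : Fin s₀, M.mulVec y (f a) = d (f a) := by
    intro a
    rw [mulVec_apply']
    have himg : ∑ j, M (f a) j * y j = ∑ j ∈ Finset.univ.image g, M (f a) j * y j := by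
      symm
      apply Finset.sum_subset (Finset.subset_univ _)
      intro j _ hj
      have : ∀ b, g b ≠ j := by
        intro b hb
        exact hj (Finset.mem_image.mpr ⟨b, Finset.mem_univ b, hb⟩)
      rw [hyzero j this, mul_zero]
    rw [himg, Finset.sum_image (fun x _ y _ h => hg h)]
    have : ∀ b, M (f a) (g b) * y (g b) = ((B₀ a b * yC b : ℤ) : ℝ) := by
      intro b
      rw [hyg b]
      push_cast
      rw [hB₀ a b]
      simp [hBdef, Matrix.submatrix]
    rw [Finset.sum_congr rfl (fun b _ => this b), ← Int.cast_sum]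
    have : ∑ b, B₀ a b * yC b = d₀ (f a) := by
      have := congrFun hyC a
      rw [← this]
      simp [Matrix.mulVec, dotProduct]
    rw [this, hd₀]
  -- conclude for all rows
  refine ⟨y, fun j => ⟨y₀ j, rfl⟩, ?_⟩
  intro i
  have hrep : ∀ u : Fin n → ℝ, M.mulVec u i = ∑ a, α i a * M.mulVec u (f a) := by
    intro u
    rw [mulVec_apply']
    have : ∀ j, M i j * u j = ∑ a, α i a * (M (f a) j * u j) := by
      intro j
      rw [KEY i j, Finset.sum_mul]
      apply Finset.sum_congr rfl
      intro a _
      ring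
    rw [Finset.sum_congr rfl (fun j _ => this j), Finset.sum_comm]
    apply Finset.sum_congr rfl
    intro a _
    rw [mulVec_apply', Finset.mul_sum]
  rw [hrep y, ← hx i, hrep x]
  apply Finset.sum_congr rfl
  intro a _
  rw [hyrows a, hx (f a)]


variable {n : ℕ}

open Matrix Finset

variable {n : ℕ}

def polySet {q : Type*} [Fintype q] (M : Matrix q (Fin n) ℝ) (d : q → ℝ) : Set (Fin n → ℝ) :=
  {x | ∀ i, M.mulVec x i ≤ d i}

lemma mem_polySet {q : Type*} [Fintype q] {M : Matrix q (Fin n) ℝ} {d : q → ℝ}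
    {x : Fin n → ℝ} : x ∈ polySet M d ↔ ∀ i, M.mulVec x i ≤ d i := Iff.rfl

lemma mulVec_add_smul {q : Type*} [Fintype q] (M : Matrix q (Fin n) ℝ) (a b : ℝ)
    (x y : Fin n → ℝ) (i : q) :
    M.mulVec (a • x + b • y) i = a * M.mulVec x i + b * M.mulVec y i := by
  rw [Matrix.mulVec_add, Matrix.mulVec_smul, Matrix.mulVec_smul]
  simp

lemma polySet_convex {q : Type*} [Fintype q] (M : Matrix q (Fin n) ℝ) (d : q → ℝ) :
    Convex ℝ (polySet M d) := by
  intro x hx y hy a b ha hb hab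
  intro i
  rw [mulVec_add_smul]
  calc a * M.mulVec x i + b * M.mulVec y i ≤ a * d i + b * d i := by
        apply add_le_add
        · exact mul_le_mul_of_nonneg_left (hx i) ha
        · exact mul_le_mul_of_nonneg_left (hy i) hb
    _ = d i := by rw [← add_mul, hab, one_mul]

lemma polySet_closed {q : Type*} [Fintype q] (M : Matrix q (Fin n) ℝ) (d : q → ℝ) :
    IsClosed (polySet M d) := by
  have h : polySet M d = ⋂ i, {x : Fin n → ℝ | M.mulVec x i ≤ d i} := by
    ext x; simp [polySet, Set.mem_iInter]
  rw [h]
  apply isClosed_iInter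
  intro i
  apply isClosed_le _ continuous_const
  have : (fun x : Fin n → ℝ => M.mulVec x i) = fun x => ∑ j, M i j * x j := by
    funext x; simp [Matrix.mulVec, dotProduct]
  rw [this]
  exact continuous_finset_sum _ fun j _ => Continuous.mul continuous_const (continuous_apply j)

lemma polySet_compact_of_bounds {q : Type*} [Fintype q] (M : Matrix q (Fin n) ℝ) (d : q → ℝ)
    (lo hi : Fin n → ℝ) (hbound : ∀ x ∈ polySet M d, ∀ j, lo j ≤ x j ∧ x j ≤ hi j) :
    IsCompact (polySet M d) := by
  apply IsCompact.of_isClosed_subset (isCompact_univ_pi fun j => isCompact_Icc (a := lo j) (b := hi j))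
    (polySet_closed M d)
  intro x hx
  rw [Set.mem_univ_pi]
  intro j
  exact ⟨(hbound x hx j).1, (hbound x hx j).2⟩

/-- Extreme point rigidity: a direction vanishing on all tight rows of an extreme point is zero. -/
lemma extreme_rigid {q : Type*} [Fintype q] {M : Matrix q (Fin n) ℝ} {d : q → ℝ}
    {u : Fin n → ℝ} (hu : u ∈ Set.extremePoints ℝ (polySet M d)) (z : Fin n → ℝ)
    (hz : ∀ i, M.mulVec u i = d i → M.mulVec z i = 0) : z = 0 := by
  classical
  by_contra hzne
  obtain ⟨huS, hext⟩ := mem_extremePoints.mp hu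
  set F : q → ℝ := fun i => if M.mulVec u i = d i then 1
    else (d i - M.mulVec u i) / (|M.mulVec z i| + 1) with hFdef
  set T : Finset ℝ := insert (1:ℝ) (Finset.univ.image F) with hTdef
  have hTne : T.Nonempty := ⟨1, Finset.mem_insert_self _ _⟩
  set ε : ℝ := T.min' hTne with hεdef
  have hεpos : 0 < ε := by
    rw [hεdef, Finset.lt_min'_iff]
    intro y hy
    rw [hTdef, Finset.mem_insert] at hy
    rcases hy with rfl | hy
    · norm_num
    · obtain ⟨i, _, rfl⟩ := Finset.mem_image.mp hy
      simp only [hFdef]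
      by_cases hti : M.mulVec u i = d i
      · rw [if_pos hti]; norm_num
      · rw [if_neg hti]
        apply div_pos
        · have := huS i
          rcases lt_or_eq_of_le this with h | h
          · linarith
          · exact absurd h hti
        · positivity
  have hεF : ∀ i, ε ≤ F i := fun i =>
    Finset.min'_le T _ (Finset.mem_insert_of_mem (Finset.mem_image_of_mem F (Finset.mem_univ i)))
  have hmem : ∀ s : ℝ, |s| ≤ ε → u + s • z ∈ polySet M d := by
    intro s hs i
    have hrow : M.mulVec (u + s • z) i = M.mulVec u i + s * M.mulVec z i := by
      rw [Matrix.mulVec_add, Matrix.mulVec_smul]; simp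
    rw [hrow]
    by_cases hti : M.mulVec u i = d i
    · rw [hz i hti, mul_zero, add_zero, hti]
    · have h1 : |s * M.mulVec z i| ≤ ε * |M.mulVec z i| := by
        rw [abs_mul]
        exact mul_le_mul_of_nonneg_right hs (abs_nonneg _)
      have h2 : ε * |M.mulVec z i| < d i - M.mulVec u i := by
        have h3 : ε ≤ (d i - M.mulVec u i) / (|M.mulVec z i| + 1) := by
          have h5 := hεF i
          simp only [hFdef] at h5
          rwa [if_neg hti] at h5
        have hslack : 0 < d i - M.mulVec u i := by
          have := huS i
          rcases lt_or_eq_of_le this with h | h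
          · linarith
          · exact absurd h hti
        calc ε * |M.mulVec z i| ≤ (d i - M.mulVec u i) / (|M.mulVec z i| + 1) * |M.mulVec z i| := by
              apply mul_le_mul_of_nonneg_right h3 (abs_nonneg _)
          _ < d i - M.mulVec u i := by
              rw [div_mul_eq_mul_div, div_lt_iff₀ (by positivity)]
              nlinarith [abs_nonneg (M.mulVec z i)]
      have : s * M.mulVec z i < d i - M.mulVec u i :=
        lt_of_le_of_lt (le_trans (le_abs_self _) h1) h2
      linarith
  have h₁ : u + ε • z ∈ polySet M d := hmem ε (by rw [abs_of_pos hεpos])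
  have h₂ : u + (-ε) • z ∈ polySet M d := hmem (-ε) (by rw [abs_neg, abs_of_pos hεpos])
  have hseg : u ∈ openSegment ℝ (u + ε • z) (u + (-ε) • z) := by
    refine ⟨1/2, 1/2, by norm_num, by norm_num, by norm_num, ?_⟩
    module
  have := (hext _ h₁ _ h₂ hseg).1
  have hz0 : ε • z = 0 := by
    have h4 : u + ε • z = u + 0 := by rw [this, add_zero]
    exact add_left_cancel h4
  exact hzne (by simpa [hεpos.ne'] using hz0)

/-- Extreme points of compact TU polyhedra with integral rhs are integral. -/
lemma extreme_int {q : Type*} [Fintype q] {M : Matrix q (Fin n) ℝ}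
    (hM : M.IsTotallyUnimodular) {d : q → ℝ} (hd : ∀ i, ∃ z : ℤ, d i = (z : ℝ))
    {u : Fin n → ℝ} (hu : u ∈ Set.extremePoints ℝ (polySet M d)) :
    ∀ j, ∃ z : ℤ, u j = (z : ℝ) := by
  classical
  set T := {i : q // M.mulVec u i = d i} with hTdef
  set M' : Matrix T (Fin n) ℝ := M.submatrix Subtype.val id with hM'def
  have hM' : M'.IsTotallyUnimodular := hM.submatrix _ _
  have hsolves : ∀ i : T, M'.mulVec u i = d i.val := by
    intro i
    have : M'.mulVec u i = M.mulVec u i.val := by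
      simp [hM'def, Matrix.mulVec, dotProduct, Matrix.submatrix]
    rw [this, i.2]
  obtain ⟨y, hyint, hy⟩ := tu_eq_int_solution M' hM' (fun i : T => d i.val)
    (fun i => hd i.val) u hsolves
  have hdiff : y - u = 0 := by
    apply extreme_rigid hu
    intro i hti
    have h1 : M.mulVec (y - u) i = M.mulVec y i - M.mulVec u i := by
      rw [Matrix.mulVec_sub]; rfl
    have h2 : M.mulVec y i = d i := by
      have := hy ⟨i, hti⟩
      have h3 : M'.mulVec y ⟨i, hti⟩ = M.mulVec y i := by
        simp [hM'def, Matrix.mulVec, dotProduct, Matrix.submatrix]; rfl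
      rw [h3] at this
      exact this
    rw [h1, h2, hti, sub_self]
  intro j
  obtain ⟨z, hz⟩ := hyint j
  refine ⟨z, ?_⟩
  have : y j - u j = 0 := congrFun hdiff j
  rw [← hz]; linarith

/-- Compact TU polyhedra with integral rhs are contained in the convex hull of their
integral points (which form a finite set). -/
lemma hull_int {q : Type*} [Fintype q] {M : Matrix q (Fin n) ℝ}
    (hM : M.IsTotallyUnimodular) {d : q → ℝ} (hd : ∀ i, ∃ z : ℤ, d i = (z : ℝ))
    (hcomp : IsCompact (polySet M d)) :
    ∃ E : Finset (Fin n → ℝ),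
      (∀ v ∈ E, v ∈ polySet M d ∧ ∀ j, ∃ z : ℤ, v j = (z : ℝ)) ∧
      polySet M d ⊆ convexHull ℝ (E : Set (Fin n → ℝ)) := by
  classical
  set S := polySet M d with hSdef
  obtain ⟨R, hR⟩ := (Metric.isBounded_iff_subset_closedBall 0).mp hcomp.isBounded
  set N : ℕ := ⌈R⌉₊ with hNdef
  have hfin : Set.Finite (S ∩ {x : Fin n → ℝ | ∀ j, ∃ z : ℤ, x j = (z : ℝ)}) := by
    apply Set.Finite.subset (Set.Finite.image (fun z : Fin n → ℤ => fun j => ((z j : ℤ) : ℝ))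
      (Fintype.piFinset (fun _ : Fin n => Finset.Icc (-(N:ℤ)) (N:ℤ))).finite_toSet)
    rintro x ⟨hxS, hxint⟩
    have hzvec : ∃ zv : Fin n → ℤ, ∀ j, x j = ((zv j : ℤ) : ℝ) := by
      choose zv hzv using hxint
      exact ⟨zv, hzv⟩
    obtain ⟨zv, hzv⟩ := hzvec
    refine ⟨zv, ?_, by funext j; exact (hzv j).symm⟩
    rw [Finset.mem_coe, Fintype.mem_piFinset]
    intro j
    rw [Finset.mem_Icc]
    have hxj : |x j| ≤ R := by
      have h1 : ‖x - 0‖ ≤ R := by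
        have := hR hxS
        rwa [Metric.mem_closedBall, dist_eq_norm] at this
      rw [sub_zero] at h1
      calc |x j| = ‖x j‖ := rfl
        _ ≤ ‖x‖ := norm_le_pi_norm x j
        _ ≤ R := h1
    have hRN : R ≤ (N : ℝ) := Nat.le_ceil R
    have habs : |((zv j : ℤ) : ℝ)| ≤ ((N : ℤ) : ℝ) := by
      rw [← hzv j]
      push_cast
      linarith
    rw [abs_le] at habs
    constructor
    · exact_mod_cast habs.1
    · exact_mod_cast habs.2
  set E : Finset (Fin n → ℝ) := hfin.toFinset with hEdef
  refine ⟨E, ?_, ?_⟩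
  · intro v hv
    rw [hEdef, Set.Finite.mem_toFinset] at hv
    exact ⟨hv.1, hv.2⟩
  · have hKM := closure_convexHull_extremePoints hcomp (polySet_convex M d)
    have hsub : Set.extremePoints ℝ S ⊆ (E : Set (Fin n → ℝ)) := by
      intro v hv
      rw [hEdef, Set.Finite.coe_toFinset]
      exact ⟨extremePoints_subset hv, extreme_int hM hd hv⟩
    calc S = closure (convexHull ℝ (Set.extremePoints ℝ S)) := hKM.symm
      _ ⊆ closure (convexHull ℝ (E : Set (Fin n → ℝ))) := by
          apply closure_mono
          exact convexHull_mono hsub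
      _ = convexHull ℝ (E : Set (Fin n → ℝ)) :=
          IsClosed.closure_eq (Set.Finite.isClosed_convexHull ℝ (E.finite_toSet))

lemma int_sum {β : Type*} (s : Finset β) (f : β → ℝ) (h : ∀ x ∈ s, ∃ z : ℤ, f x = (z : ℝ)) :
    ∃ z : ℤ, ∑ x ∈ s, f x = (z : ℝ) := by
  classical
  choose g hg using h
  refine ⟨∑ x ∈ s.attach, g x.1 x.2, ?_⟩
  rw [← Finset.sum_attach s f]
  push_cast
  exact Finset.sum_congr rfl fun x _ => hg x.1 x.2

/-- The conclusion of the main decomposition lemma. -/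
def GoodDecomp (A : Matrix (Fin m) (Fin n) ℝ) (b : Fin m → ℤ) (k : ℕ) (w : Fin n → ℤ)
    (t : ℕ) (x : Fin t → Fin n → ℝ) (c : Fin t → ℕ) : Prop :=
  (∀ a i, ∑ j, A i j * x a j ≤ (b i : ℝ)) ∧
  (∀ a j, ∃ z : ℤ, x a j = (z : ℝ)) ∧
  AffineIndependent ℝ x ∧
  (∀ a, 0 < c a) ∧
  (∑ a, c a = k) ∧
  (∀ j, (w j : ℝ) = ∑ a, (c a : ℝ) * x a j) ∧
  (∀ i, (∑ j, A i j * (w j : ℝ)) = (k : ℝ) * (b i : ℝ) → ∀ a, ∑ j, A i j * x a j = (b i : ℝ)) ∧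
  (∀ j z, w j = (k : ℤ) * z → ∀ a, x a j = (z : ℝ))

set_option maxHeartbeats 2000000 in
lemma main_decomp (A : Matrix (Fin m) (Fin n) ℝ) (hA : A.IsTotallyUnimodular) (b : Fin m → ℤ) :
    ∀ k : ℕ, 1 ≤ k → ∀ w : Fin n → ℤ,
    (∀ i, ∑ j, A i j * (w j : ℝ) ≤ (k : ℝ) * (b i : ℝ)) →
    ∃ (t : ℕ) (x : Fin t → Fin n → ℝ) (c : Fin t → ℕ), GoodDecomp A b k w t x c := by
  intro k
  induction k using Nat.strong_induction_on with
  | _ k IH =>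
    intro hk w hw
    have hkR : (0:ℝ) < (k:ℝ) := by exact_mod_cast hk
    by_cases hdvd : ∀ j, (k:ℤ) ∣ w j
    · -- base case: w/k is an integer point
      choose z hz using hdvd
      haveI : Subsingleton (Fin 1) := ⟨fun a b => Subsingleton.elim a b⟩
      refine ⟨1, fun _ => fun j => ((z j : ℤ) : ℝ), fun _ => k, ?_, ?_, ?_, ?_, ?_, ?_, ?_, ?_⟩
      · intro a i
        have h1 : ∑ j, A i j * (w j : ℝ) = (k:ℝ) * ∑ j, A i j * ((z j : ℤ) : ℝ) := by
          rw [Finset.mul_sum]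
          apply Finset.sum_congr rfl
          intro j _
          rw [hz j]; push_cast; ring
        have := hw i
        rw [h1] at this
        exact le_of_mul_le_mul_left this hkR
      · intro a j; exact ⟨z j, rfl⟩
      · exact affineIndependent_of_subsingleton ℝ _
      · intro a; exact hk
      · simp
      · intro j
        rw [hz j]
        push_cast
        simp
      · intro i hi a
        have h1 : ∑ j, A i j * (w j : ℝ) = (k:ℝ) * ∑ j, A i j * ((z j : ℤ) : ℝ) := by
          rw [Finset.mul_sum]
          apply Finset.sum_congr rfl
          intro j _
          rw [hz j]; push_cast; ring
        rw [h1] at hi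
        exact mul_left_cancel₀ hkR.ne' hi
      · intro j z' hz' a
        have : z' = z j := by
          have h1 : (k:ℤ) * z' = (k:ℤ) * z j := by rw [← hz', ← hz j]
          exact mul_left_cancel₀ (by exact_mod_cast hkR.ne') h1
        rw [this]
    · -- recursive case
      push_neg at hdvd
      obtain ⟨j₀, hj₀⟩ := hdvd
      have hkZ : (0:ℤ) < (k:ℤ) := by exact_mod_cast hk
      set r : ℤ := w j₀ % (k:ℤ) with hrdef
      have hr0 : 0 < r := by
        rcases lt_or_eq_of_le (Int.emod_nonneg (w j₀) hkZ.ne') with h | h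
        · exact h
        · exact absurd (Int.dvd_of_emod_eq_zero h.symm) hj₀
      have hrk : r < k := Int.emod_lt_of_pos _ hkZ
      set rn : ℕ := r.toNat with hrndef
      have hrnr : (rn:ℤ) = r := Int.toNat_of_nonneg hr0.le
      have hrn1 : 1 ≤ rn := by omega
      have hrnk : rn < k := by omega
      set sn : ℕ := k - rn with hsndef
      have hsn1 : 1 ≤ sn := by omega
      have hsnk : sn < k := by omega
      have hsnrn : sn + rn = k := by omega
      have hsnZ : (sn:ℤ) = (k:ℤ) - r := by omega
      set lo : Fin n → ℤ := fun j => w j / (k:ℤ) with hlodef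
      have hlo_emod : ∀ j, (k:ℤ) * lo j + w j % (k:ℤ) = w j := fun j => Int.mul_ediv_add_emod (w j) k
      have hmod0 : ∀ j, 0 ≤ w j % (k:ℤ) := fun j => Int.emod_nonneg _ hkZ.ne'
      have hmodk : ∀ j, w j % (k:ℤ) < k := fun j => Int.emod_lt_of_pos _ hkZ
      classical
      set hi : Fin n → ℤ := fun j => if (k:ℤ) ∣ w j then lo j else lo j + 1 with hhidef
      set p : Fin n → ℝ := fun j => (w j : ℝ) / (k:ℝ) with hpdef
      have hlow : ∀ j, (k:ℤ) * lo j ≤ w j ∧ w j ≤ (k:ℤ) * hi j := by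
        intro j
        constructor
        · have h1 := hlo_emod j
          have h2 := hmod0 j
          omega
        · simp only [hhidef]
          by_cases h : (k:ℤ) ∣ w j
          · rw [if_pos h]
            have h3 : w j % (k:ℤ) = 0 := by
              rcases h with ⟨c, hc⟩
              rw [hc]
              exact Int.mul_emod_right _ _
            have h1 := hlo_emod j
            linarith
          · rw [if_neg h]
            have h1 := hlo_emod j
            have h2 := hmodk j
            have h3 : (k:ℤ) * (lo j + 1) = (k:ℤ) * lo j + k := by ring
            linarith
      have hplo : ∀ j, (lo j : ℝ) ≤ p j := by
        intro j
        rw [hpdef, le_div_iff₀ hkR]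
        have := (hlow j).1
        have : ((k:ℤ) * lo j : ℝ) ≤ ((w j : ℤ) : ℝ) := by exact_mod_cast this
        push_cast at this ⊢
        linarith
      have hphi : ∀ j, p j ≤ (hi j : ℝ) := by
        intro j
        rw [hpdef, div_le_iff₀ hkR]
        have := (hlow j).2
        have : ((w j : ℤ) : ℝ) ≤ ((k:ℤ) * hi j : ℝ) := by exact_mod_cast this
        push_cast at this ⊢
        linarith
      -- the box polytope S around p
      set MS : Matrix (Fin m ⊕ (Fin n ⊕ Fin n)) (Fin n) ℝ :=
        fromRows A (fromRows (1 : Matrix (Fin n) (Fin n) ℝ) (-1)) with hMSdef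
      set dS : (Fin m ⊕ (Fin n ⊕ Fin n)) → ℝ :=
        Sum.elim (fun i => (b i : ℝ))
          (Sum.elim (fun j => (hi j : ℝ)) (fun j => -(lo j : ℝ))) with hdSdef
      have hrows1 : ∀ i : Fin n ⊕ Fin n, ∃ j : Fin n, ∃ s : SignType,
          (fromRows (1 : Matrix (Fin n) (Fin n) ℝ) (-1)) i = Pi.single j s.cast := by
        intro i
        rcases i with j | j
        · exact ⟨j, 1, funext fun l => by
            simp [Matrix.one_apply, Pi.single_apply, eq_comm, Matrix.fromRows_apply_inl]⟩
        · refine ⟨j, -1, funext fun l => ?_⟩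
          by_cases h : l = j
          · subst h; simp [Matrix.one_apply, Matrix.fromRows_apply_inr]
          · simp [Matrix.one_apply, Pi.single_apply, h, Ne.symm h, Matrix.fromRows_apply_inr]
      have hMS_TU : MS.IsTotallyUnimodular := tu_unit_rows hA _ hrows1
      have memS : ∀ x : Fin n → ℝ, x ∈ polySet MS dS ↔
          ((∀ i, ∑ j, A i j * x j ≤ (b i:ℝ)) ∧ ∀ j, (lo j:ℝ) ≤ x j ∧ x j ≤ (hi j:ℝ)) := by
        intro x
        constructor
        · intro hx
          refine ⟨fun i => ?_, fun j => ⟨?_, ?_⟩⟩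
          · have h1 := hx (Sum.inl i)
            simp only [hMSdef, hdSdef, Matrix.fromRows_mulVec, Sum.elim_inl] at h1
            rwa [mulVec_apply'] at h1
          · have h1 := hx (Sum.inr (Sum.inr j))
            simp only [hMSdef, hdSdef, Matrix.fromRows_mulVec, Sum.elim_inr,
              Matrix.neg_mulVec, Matrix.one_mulVec] at h1
            simp only [Pi.neg_apply] at h1
            linarith
          · have h1 := hx (Sum.inr (Sum.inl j))
            simp only [hMSdef, hdSdef, Matrix.fromRows_mulVec, Sum.elim_inr, Sum.elim_inl,
              Matrix.one_mulVec] at h1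
            exact h1
        · rintro ⟨h1, h2⟩ i
          rcases i with i | j | j
          · simp only [hMSdef, hdSdef, Matrix.fromRows_mulVec, Sum.elim_inl]
            rw [mulVec_apply']
            exact h1 i
          · simp only [hMSdef, hdSdef, Matrix.fromRows_mulVec, Sum.elim_inr, Sum.elim_inl,
              Matrix.one_mulVec]
            exact (h2 j).2
          · simp only [hMSdef, hdSdef, Matrix.fromRows_mulVec, Sum.elim_inr,
              Matrix.neg_mulVec, Matrix.one_mulVec, Pi.neg_apply]
            have := (h2 j).1
            linarith
      have hpS : p ∈ polySet MS dS := by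
        rw [memS]
        refine ⟨fun i => ?_, fun j => ⟨hplo j, hphi j⟩⟩
        have h1 : ∑ j, A i j * p j = (∑ j, A i j * (w j:ℝ)) / (k:ℝ) := by
          rw [Finset.sum_div]
          apply Finset.sum_congr rfl
          intro j _
          rw [hpdef]
          ring
        rw [h1, div_le_iff₀ hkR]
        calc ∑ j, A i j * (w j:ℝ) ≤ (k:ℝ) * (b i:ℝ) := hw i
          _ = (b i:ℝ) * (k:ℝ) := by ring
      have hdS_int : ∀ i, ∃ z : ℤ, dS i = (z:ℝ) := by
        intro i
        rcases i with i | j | j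
        · exact ⟨b i, rfl⟩
        · exact ⟨hi j, rfl⟩
        · exact ⟨-(lo j), by push_cast; rfl⟩
      have hScomp : IsCompact (polySet MS dS) :=
        polySet_compact_of_bounds MS dS (fun j => (lo j:ℝ)) (fun j => (hi j:ℝ))
          (fun x hx j => ((memS x).mp hx).2 j)
      obtain ⟨E, hE, hhull⟩ := hull_int hMS_TU hdS_int hScomp
      have hpE : p ∈ convexHull ℝ (E : Set (Fin n → ℝ)) := hhull hpS
      rw [Finset.convexHull_eq] at hpE
      obtain ⟨γ, hγ0, hγ1, hγcm⟩ := hpE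
      have hcm : ∑ v ∈ E, γ v • v = p := by
        have h := Finset.centerMass_eq_of_sum_1 E id hγ1
        rw [hγcm] at h
        simpa using h.symm
      -- split E along coordinate j₀
      set Em : Finset (Fin n → ℝ) := E.filter (fun v => v j₀ = (lo j₀ : ℝ)) with hEmdef
      set Ep : Finset (Fin n → ℝ) := E.filter (fun v => ¬ (v j₀ = (lo j₀ : ℝ))) with hEpdef
      have hhij₀ : hi j₀ = lo j₀ + 1 := by simp only [hhidef]; rw [if_neg hj₀]
      have hvj₀p : ∀ v ∈ Ep, v j₀ = (lo j₀:ℝ) + 1 := by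
        intro v hv
        rw [hEpdef, Finset.mem_filter] at hv
        obtain ⟨hvE, hvne⟩ := hv
        obtain ⟨hvS, hvint⟩ := hE v hvE
        obtain ⟨zv, hzv⟩ := hvint j₀
        have hbox := ((memS v).mp hvS).2 j₀
        rw [hzv] at hbox hvne ⊢
        rw [hhij₀] at hbox
        have h1 : lo j₀ ≤ zv := by exact_mod_cast hbox.1
        have h2 : zv ≤ lo j₀ + 1 := by exact_mod_cast hbox.2
        have h3 : zv ≠ lo j₀ := by
          intro hc
          exact hvne (by rw [hc])
        have h4 : zv = lo j₀ + 1 := by omega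
        rw [h4]
        push_cast
        ring
      set μ : ℝ := ∑ v ∈ Em, γ v with hμdef
      have hμc : μ + ∑ v ∈ Ep, γ v = 1 := by
        rw [hμdef, hEmdef, hEpdef, Finset.sum_filter_add_sum_filter_not]
        exact hγ1
      have hpj₀ : p j₀ = (lo j₀:ℝ) + (1 - μ) := by
        have h1 : p j₀ = ∑ v ∈ E, γ v * v j₀ := by
          rw [← hcm]
          rw [Finset.sum_apply]
          apply Finset.sum_congr rfl
          intro v _
          simp
        rw [h1, ← Finset.sum_filter_add_sum_filter_not E (fun v => v j₀ = (lo j₀:ℝ))]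
        have hEmsum : ∑ v ∈ Em, γ v * v j₀ = μ * (lo j₀:ℝ) := by
          rw [hμdef, Finset.sum_mul]
          apply Finset.sum_congr rfl
          intro v hv
          rw [hEmdef, Finset.mem_filter] at hv
          rw [hv.2]
        have hEpsum : ∑ v ∈ Ep, γ v * v j₀ = (1 - μ) * ((lo j₀:ℝ) + 1) := by
          have h2 : ∑ v ∈ Ep, γ v = 1 - μ := by linarith
          rw [← h2, Finset.sum_mul]
          apply Finset.sum_congr rfl
          intro v hv
          rw [hvj₀p v hv]
        rw [show E.filter (fun v => v j₀ = (lo j₀:ℝ)) = Em from hEmdef.symm,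
          show E.filter (fun v => ¬ v j₀ = (lo j₀:ℝ)) = Ep from hEpdef.symm,
          hEmsum, hEpsum]
        ring
      have hwj₀ : (w j₀ : ℝ) = (k:ℝ) * (lo j₀:ℝ) + (r:ℝ) := by
        have h2 : w j₀ = (k:ℤ) * lo j₀ + r := by
          have h1 := hlo_emod j₀
          rw [hrdef]
          linarith
        exact_mod_cast h2
      have hμval : μ = (sn:ℝ)/(k:ℝ) := by
        have h1 : p j₀ = (w j₀:ℝ)/(k:ℝ) := by rw [hpdef]
        rw [hpj₀, hwj₀] at h1
        have hsnR : (sn:ℝ) = (k:ℝ) - (r:ℝ) := by exact_mod_cast hsnZ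
        rw [hsnR]
        field_simp at h1 ⊢
        linarith
      have hμpos : 0 < μ := by
        rw [hμval]
        apply div_pos _ hkR
        exact_mod_cast hsn1
      have hμlt : μ < 1 := by
        rw [hμval, div_lt_one hkR]
        exact_mod_cast hsnk
      set ym : Fin n → ℝ := μ⁻¹ • ∑ v ∈ Em, γ v • v with hymdef
      set yp : Fin n → ℝ := (1-μ)⁻¹ • ∑ v ∈ Ep, γ v • v with hypdef
      have hymS : ym ∈ polySet MS dS := by
        have hcm2 : ym = Em.centerMass γ id := by
          rw [Finset.centerMass, hymdef, hμdef]
          simp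
        rw [hcm2]
        have h3 := Finset.centerMass_mem_convexHull Em
          (fun v hv => hγ0 v (Finset.mem_of_mem_filter v hv))
          (by rw [← hμdef]; exact hμpos)
          (fun v hv => (hE v (Finset.mem_of_mem_filter v hv)).1)
        rwa [(convexHull_eq_self).mpr (polySet_convex MS dS)] at h3
      have hypS : yp ∈ polySet MS dS := by
        have hcm2 : yp = Ep.centerMass γ id := by
          rw [Finset.centerMass, hypdef]
          have h2 : ∑ v ∈ Ep, γ v = 1 - μ := by linarith
          rw [h2]
          simp
        rw [hcm2]
        have h3 := Finset.centerMass_mem_convexHull Ep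
          (fun v hv => hγ0 v (Finset.mem_of_mem_filter v hv))
          (by have h2 : ∑ v ∈ Ep, γ v = 1 - μ := by linarith
              rw [h2]; linarith)
          (fun v hv => (hE v (Finset.mem_of_mem_filter v hv)).1)
        rwa [(convexHull_eq_self).mpr (polySet_convex MS dS)] at h3
      have hymj₀ : ym j₀ = (lo j₀ : ℝ) := by
        rw [hymdef]
        have h1 : (∑ v ∈ Em, γ v • v) j₀ = μ * (lo j₀:ℝ) := by
          rw [Finset.sum_apply, hμdef, Finset.sum_mul]
          apply Finset.sum_congr rfl
          intro v hv
          rw [hEmdef, Finset.mem_filter] at hv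
          simp [hv.2]
        simp only [Pi.smul_apply, smul_eq_mul]
        rw [h1, ← mul_assoc, inv_mul_cancel₀ hμpos.ne', one_mul]
      have hw_split : ∀ j, (w j : ℝ) = (sn:ℝ) * ym j + (rn:ℝ) * yp j := by
        intro j
        have h1 : μ • ym + (1-μ) • yp = p := by
          rw [hymdef, hypdef, smul_smul, smul_smul,
            mul_inv_cancel₀ hμpos.ne', mul_inv_cancel₀ (by linarith : (1:ℝ)-μ ≠ 0),
            one_smul, one_smul]
          rw [← hcm, hEmdef, hEpdef]
          exact Finset.sum_filter_add_sum_filter_not E _ _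
        have h2 := congrFun h1 j
        simp only [Pi.add_apply, Pi.smul_apply, smul_eq_mul] at h2
        have h3 : (w j : ℝ) = (k:ℝ) * p j := by
          rw [hpdef]
          field_simp
        have hsnR : (sn:ℝ) = (k:ℝ) * μ := by
          rw [hμval]
          field_simp
        have hrnR : (rn:ℝ) = (k:ℝ) * (1-μ) := by
          have hkrn : (rn:ℝ) = (k:ℝ) - (sn:ℝ) := by
            have : ((sn + rn : ℕ) : ℝ) = (k:ℝ) := by exact_mod_cast hsnrn
            push_cast at this
            linarith
          rw [hkrn, hμval]
          field_simp
        rw [h3, ← h2, hsnR, hrnR]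
        ring
      -- the Y polytope: (sn)P ∩ (w - (rn)P) ∩ box, with coordinate j₀ pinned low
      set hi' : Fin n → ℤ := fun j => if j = j₀ then lo j else hi j with hhi'def
      set MY : Matrix ((Fin m ⊕ Fin m) ⊕ (Fin n ⊕ Fin n)) (Fin n) ℝ :=
        fromRows (fromRows A (-A)) (fromRows (1 : Matrix (Fin n) (Fin n) ℝ) (-1)) with hMYdef
      set dY : ((Fin m ⊕ Fin m) ⊕ (Fin n ⊕ Fin n)) → ℝ := Sum.elim
        (Sum.elim (fun i => (sn:ℝ) * (b i:ℝ)) (fun i => (rn:ℝ) * (b i:ℝ) - ∑ j, A i j * (w j:ℝ)))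
        (Sum.elim (fun j => (sn:ℝ) * (hi' j:ℝ)) (fun j => -((sn:ℝ) * (lo j:ℝ)))) with hdYdef
      have hMY_TU : MY.IsTotallyUnimodular := tu_unit_rows (tu_fromRows_neg hA) _ hrows1
      have hdY_int : ∀ i, ∃ z : ℤ, dY i = (z:ℝ) := by
        intro i
        rcases i with (i | i) | (j | j)
        · exact ⟨(sn:ℤ) * b i, by push_cast; rfl⟩
        · obtain ⟨z, hz⟩ := int_sum Finset.univ (fun j => A i j * (w j:ℝ))
            (fun j _ => by
              obtain ⟨z', hz'⟩ := tu_entry_int hA i j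
              refine ⟨z' * w j, ?_⟩
              show A i j * (w j:ℝ) = _
              rw [hz']; push_cast; ring)
          exact ⟨(rn:ℤ) * b i - z, by simp only [hdYdef, Sum.elim_inl, Sum.elim_inr]; rw [hz]; push_cast; ring⟩
        · exact ⟨(sn:ℤ) * hi' j, by push_cast; rfl⟩
        · exact ⟨-((sn:ℤ) * lo j), by push_cast; rfl⟩
      have memY : ∀ x : Fin n → ℝ, x ∈ polySet MY dY ↔
          ((∀ i, ∑ j, A i j * x j ≤ (sn:ℝ) * (b i:ℝ)) ∧
           (∀ i, ∑ j, A i j * ((w j:ℝ) - x j) ≤ (rn:ℝ) * (b i:ℝ)) ∧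
           (∀ j, (sn:ℝ) * (lo j:ℝ) ≤ x j ∧ x j ≤ (sn:ℝ) * (hi' j:ℝ))) := by
        intro x
        have hneg : ∀ i, ∑ j, A i j * ((w j:ℝ) - x j) = (∑ j, A i j * (w j:ℝ)) - ∑ j, A i j * x j := by
          intro i
          rw [← Finset.sum_sub_distrib]
          apply Finset.sum_congr rfl
          intro j _
          ring
        constructor
        · intro hx
          refine ⟨fun i => ?_, fun i => ?_, fun j => ⟨?_, ?_⟩⟩
          · have h1 := hx (Sum.inl (Sum.inl i))
            simp only [hMYdef, hdYdef, Matrix.fromRows_mulVec, Sum.elim_inl] at h1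
            rwa [mulVec_apply'] at h1
          · have h1 := hx (Sum.inl (Sum.inr i))
            simp only [hMYdef, hdYdef, Matrix.fromRows_mulVec, Sum.elim_inl, Sum.elim_inr,
              Matrix.neg_mulVec, Pi.neg_apply] at h1
            rw [mulVec_apply'] at h1
            rw [hneg]
            linarith
          · have h1 := hx (Sum.inr (Sum.inr j))
            simp only [hMYdef, hdYdef, Matrix.fromRows_mulVec, Sum.elim_inr,
              Matrix.neg_mulVec, Matrix.one_mulVec, Pi.neg_apply] at h1
            linarith
          · have h1 := hx (Sum.inr (Sum.inl j))
            simp only [hMYdef, hdYdef, Matrix.fromRows_mulVec, Sum.elim_inr, Sum.elim_inl,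
              Matrix.one_mulVec] at h1
            exact h1
        · rintro ⟨h1, h2, h3⟩ i
          rcases i with (i | i) | (j | j)
          · simp only [hMYdef, hdYdef, Matrix.fromRows_mulVec, Sum.elim_inl]
            rw [mulVec_apply']
            exact h1 i
          · simp only [hMYdef, hdYdef, Matrix.fromRows_mulVec, Sum.elim_inl, Sum.elim_inr,
              Matrix.neg_mulVec, Pi.neg_apply]
            rw [mulVec_apply']
            have := h2 i
            rw [hneg] at this
            linarith
          · simp only [hMYdef, hdYdef, Matrix.fromRows_mulVec, Sum.elim_inr, Sum.elim_inl,
              Matrix.one_mulVec]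
            exact (h3 j).2
          · simp only [hMYdef, hdYdef, Matrix.fromRows_mulVec, Sum.elim_inr,
              Matrix.neg_mulVec, Matrix.one_mulVec, Pi.neg_apply]
            have := (h3 j).1
            linarith
      have hsnR0 : (0:ℝ) ≤ (sn:ℝ) := by positivity
      have hrnR0 : (0:ℝ) ≤ (rn:ℝ) := by positivity
      have hu₀Y : ((sn:ℝ) • ym) ∈ polySet MY dY := by
        rw [memY]
        have hymbox := ((memS ym).mp hymS).2
        have hymrows := ((memS ym).mp hymS).1
        have hyprows := ((memS yp).mp hypS).1
        refine ⟨fun i => ?_, fun i => ?_, fun j => ⟨?_, ?_⟩⟩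
        · have h1 : ∑ j, A i j * ((sn:ℝ) • ym) j = (sn:ℝ) * ∑ j, A i j * ym j := by
            rw [Finset.mul_sum]
            apply Finset.sum_congr rfl
            intro j _
            simp; ring
          rw [h1]
          exact mul_le_mul_of_nonneg_left (hymrows i) hsnR0
        · have h1 : ∀ j, (w j:ℝ) - ((sn:ℝ) • ym) j = (rn:ℝ) * yp j := by
            intro j
            have := hw_split j
            simp only [Pi.smul_apply, smul_eq_mul]
            linarith
          have h2 : ∑ j, A i j * ((w j:ℝ) - ((sn:ℝ) • ym) j) = (rn:ℝ) * ∑ j, A i j * yp j := by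
            rw [Finset.mul_sum]
            apply Finset.sum_congr rfl
            intro j _
            rw [h1 j]; ring
          rw [h2]
          exact mul_le_mul_of_nonneg_left (hyprows i) hrnR0
        · simp only [Pi.smul_apply, smul_eq_mul]
          exact mul_le_mul_of_nonneg_left (hymbox j).1 hsnR0
        · simp only [Pi.smul_apply, smul_eq_mul, hhi'def]
          by_cases hj : j = j₀
          · subst hj
            rw [if_pos rfl, hymj₀]
          · rw [if_neg hj]
            exact mul_le_mul_of_nonneg_left (hymbox j).2 hsnR0
      have hYcomp : IsCompact (polySet MY dY) :=
        polySet_compact_of_bounds MY dY (fun j => (sn:ℝ)*(lo j:ℝ)) (fun j => (sn:ℝ)*(hi' j:ℝ))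
          (fun x hx j => ((memY x).mp hx).2.2 j)
      obtain ⟨u, hu⟩ := hYcomp.extremePoints_nonempty ⟨_, hu₀Y⟩
      have huY : u ∈ polySet MY dY := extremePoints_subset hu
      have huint := extreme_int hMY_TU hdY_int hu
      choose wL hwL using huint
      set wR : Fin n → ℤ := fun j => w j - wL j with hwRdef
      have hmemu := (memY u).mp huY
      have FL : ∀ i, ∑ j, A i j * ((wL j : ℤ):ℝ) ≤ (sn:ℝ) * (b i:ℝ) := by
        intro i
        have h1 := hmemu.1 i
        rwa [Finset.sum_congr rfl (fun j _ => by rw [hwL j] : ∀ j ∈ Finset.univ,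
          A i j * u j = A i j * ((wL j : ℤ):ℝ))] at h1
      have FR : ∀ i, ∑ j, A i j * ((wR j : ℤ):ℝ) ≤ (rn:ℝ) * (b i:ℝ) := by
        intro i
        have h1 := hmemu.2.1 i
        rwa [Finset.sum_congr rfl (fun j _ => by
          rw [hwL j, hwRdef]; push_cast; ring : ∀ j ∈ Finset.univ,
          A i j * ((w j:ℝ) - u j) = A i j * ((wR j : ℤ):ℝ))] at h1
      have Fbox : ∀ j, (sn:ℤ) * lo j ≤ wL j ∧ wL j ≤ (sn:ℤ) * hi' j := by
        intro j
        have h1 := (hmemu.2.2 j).1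
        have h2 := (hmemu.2.2 j).2
        rw [hwL j] at h1 h2
        constructor
        · exact_mod_cast h1
        · exact_mod_cast h2
      obtain ⟨tL, xL, cL, hL1, hL2, hL3, hL4, hL5, hL6, hL7, hL8⟩ := IH sn hsnk hsn1 wL FL
      obtain ⟨tR, xR, cR, hR1, hR2, hR3, hR4, hR5, hR6, hR7, hR8⟩ := IH rn hrnk hrn1 wR FR
      have hksnrn : (k:ℤ) = (sn:ℤ) + (rn:ℤ) := by exact_mod_cast hsnrn.symm
      have hwj₀Z : w j₀ = (k:ℤ) * lo j₀ + r := by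
        have h1 := hlo_emod j₀
        rw [hrdef]
        linarith
      have hwLj₀ : wL j₀ = (sn:ℤ) * lo j₀ := by
        have h1 := (Fbox j₀).1
        have h2 := (Fbox j₀).2
        have h3 : hi' j₀ = lo j₀ := by simp [hhi'def]
        rw [h3] at h2
        omega
      have hwRj₀ : wR j₀ = (rn:ℤ) * (lo j₀ + 1) := by
        show w j₀ - wL j₀ = _
        rw [hwLj₀, hwj₀Z, hksnrn, ← hrnr]
        ring
      have XLj₀ : ∀ a, xL a j₀ = ((lo j₀ : ℤ):ℝ) := fun a => hL8 j₀ (lo j₀) hwLj₀ a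
      have XRj₀ : ∀ a, xR a j₀ = ((lo j₀ + 1 : ℤ):ℝ) := fun a => hR8 j₀ (lo j₀ + 1) hwRj₀ a
      have hwsum : ∀ j, (w j : ℝ) = ((wL j : ℤ):ℝ) + ((wR j : ℤ):ℝ) := by
        intro j
        rw [hwRdef]
        push_cast
        ring
      refine ⟨tL + tR, Fin.append xL xR, Fin.append cL cR, ?_, ?_, ?_, ?_, ?_, ?_, ?_, ?_⟩
      · intro a i
        refine Fin.addCases (motive := fun a => ∑ j, A i j * (Fin.append xL xR a) j ≤ (b i:ℝ))
          (fun a' => ?_) (fun a' => ?_) a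
        · simpa only [Fin.append_left] using hL1 a' i
        · simpa only [Fin.append_right] using hR1 a' i
      · intro a j
        refine Fin.addCases (motive := fun a => ∃ z : ℤ, (Fin.append xL xR a) j = (z:ℝ))
          (fun a' => ?_) (fun a' => ?_) a
        · simpa only [Fin.append_left] using hL2 a' j
        · simpa only [Fin.append_right] using hR2 a' j
      · -- affine independence
        rw [affineIndependent_iff_of_fintype]
        intro lam hsum hvsub
        have hvsub' : ∑ a, lam a • (Fin.append xL xR a) = 0 := by
          rw [Finset.weightedVSub_eq_weightedVSubOfPoint_of_sum_eq_zero _ _ _ hsum (0 : Fin n → ℝ),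
            Finset.weightedVSubOfPoint_apply] at hvsub
          simpa [vsub_eq_sub] using hvsub
        set lamL : Fin tL → ℝ := fun a => lam (Fin.castAdd tR a) with hlamLdef
        set lamR : Fin tR → ℝ := fun a => lam (Fin.natAdd tL a) with hlamRdef
        have hsum' : ∑ a, lamL a + ∑ a, lamR a = 0 := by
          rw [hlamLdef, hlamRdef, ← Fin.sum_univ_add]
          exact hsum
        have hvsplit : (∑ a, lamL a • xL a) + (∑ a, lamR a • xR a) = 0 := by
          rw [Fin.sum_univ_add] at hvsub'
          simpa only [Fin.append_left, Fin.append_right] using hvsub'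
        have hcoordL : (∑ a, lamL a • xL a) j₀ = (∑ a, lamL a) * ((lo j₀:ℤ):ℝ) := by
          rw [Finset.sum_apply, Finset.sum_mul]
          exact Finset.sum_congr rfl fun a _ => by
            simp only [Pi.smul_apply, smul_eq_mul, XLj₀ a]
        have hcoordR : (∑ a, lamR a • xR a) j₀ = (∑ a, lamR a) * ((lo j₀ + 1:ℤ):ℝ) := by
          rw [Finset.sum_apply, Finset.sum_mul]
          exact Finset.sum_congr rfl fun a _ => by
            simp only [Pi.smul_apply, smul_eq_mul, XRj₀ a]
        have hj₀eq : (∑ a, lamL a) * ((lo j₀:ℤ):ℝ) + (∑ a, lamR a) * ((lo j₀ + 1:ℤ):ℝ) = 0 := by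
          have := congrFun hvsplit j₀
          simp only [Pi.add_apply, Pi.zero_apply] at this
          rw [hcoordL, hcoordR] at this
          exact this
        have hsumR0 : ∑ a, lamR a = 0 := by
          have hcast : ((lo j₀ + 1:ℤ):ℝ) = ((lo j₀:ℤ):ℝ) + 1 := by push_cast; ring
          rw [hcast] at hj₀eq
          linear_combination hj₀eq - ((lo j₀:ℤ):ℝ) * hsum'
        have hsumL0 : ∑ a, lamL a = 0 := by linarith
        set z : Fin n → ℝ := ∑ a, lamL a • xL a with hzdef
        have hzR : ∑ a, lamR a • xR a = -z := by
          rw [hzdef]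
          exact eq_neg_of_add_eq_zero_right hvsplit
        have hzco : ∀ j, z j = ∑ a, lamL a * xL a j := by
          intro j
          rw [hzdef, Finset.sum_apply]
          exact Finset.sum_congr rfl fun a _ => by simp
        have hzRco : ∀ j, z j = -∑ a, lamR a * xR a j := by
          intro j
          have h1 := congrFun hzR j
          rw [Finset.sum_apply] at h1
          simp only [Pi.smul_apply, smul_eq_mul, Pi.neg_apply] at h1
          linarith
        have hz0 : z = 0 := by
          apply extreme_rigid hu z
          intro row htight
          rcases row with (i | i) | (j | j)
          · -- tight A-row on the left part
            have h1 : MY.mulVec u (Sum.inl (Sum.inl i)) = ∑ j, A i j * ((wL j:ℤ):ℝ) := by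
              simp only [hMYdef, Matrix.fromRows_mulVec, Sum.elim_inl]
              rw [mulVec_apply']
              exact Finset.sum_congr rfl fun j _ => by rw [hwL j]
            have h2 : dY (Sum.inl (Sum.inl i)) = (sn:ℝ) * (b i:ℝ) := rfl
            rw [h1, h2] at htight
            have h3 := hL7 i htight
            show MY.mulVec z (Sum.inl (Sum.inl i)) = 0
            simp only [hMYdef, Matrix.fromRows_mulVec, Sum.elim_inl]
            rw [mulVec_apply']
            have h4 : ∑ j, A i j * z j = ∑ a, lamL a * ∑ j, A i j * xL a j := by
              rw [Finset.sum_congr rfl (fun j _ => by rw [hzco j, Finset.mul_sum] :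
                ∀ j ∈ Finset.univ, A i j * z j = ∑ a, A i j * (lamL a * xL a j))]
              rw [Finset.sum_comm]
              exact Finset.sum_congr rfl fun a _ => by
                rw [Finset.mul_sum]
                exact Finset.sum_congr rfl fun j _ => by ring
            rw [h4, Finset.sum_congr rfl (fun a _ => by rw [h3 a]),
              ← Finset.sum_mul, hsumL0, zero_mul]
          · -- tight A-row on the right part
            have h1 : MY.mulVec u (Sum.inl (Sum.inr i)) = -∑ j, A i j * u j := by
              simp only [hMYdef, Matrix.fromRows_mulVec, Sum.elim_inl, Sum.elim_inr,
                Matrix.neg_mulVec, Pi.neg_apply]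
              rw [mulVec_apply']
            have h2 : dY (Sum.inl (Sum.inr i)) = (rn:ℝ) * (b i:ℝ) - ∑ j, A i j * (w j:ℝ) := rfl
            rw [h1, h2] at htight
            have h5 : ∑ j, A i j * ((wR j:ℤ):ℝ) =
                (∑ j, A i j * (w j:ℝ)) - ∑ j, A i j * u j := by
              rw [← Finset.sum_sub_distrib]
              exact Finset.sum_congr rfl fun j _ => by
                rw [hwL j, hwRdef]
                push_cast
                ring
            have h6 : ∑ j, A i j * ((wR j:ℤ):ℝ) = (rn:ℝ) * (b i:ℝ) := by
              rw [h5]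
              linarith
            have h3 := hR7 i h6
            show MY.mulVec z (Sum.inl (Sum.inr i)) = 0
            simp only [hMYdef, Matrix.fromRows_mulVec, Sum.elim_inl, Sum.elim_inr,
              Matrix.neg_mulVec, Pi.neg_apply]
            rw [mulVec_apply']
            have h4 : ∑ j, A i j * z j = -∑ a, lamR a * ∑ j, A i j * xR a j := by
              have e1 : ∀ j, A i j * z j = -(∑ a, A i j * (lamR a * xR a j)) := by
                intro j
                rw [hzRco j, mul_neg, Finset.mul_sum]
              rw [Finset.sum_congr rfl (fun j _ => e1 j), Finset.sum_neg_distrib,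
                Finset.sum_comm]
              apply congrArg Neg.neg
              apply Finset.sum_congr rfl
              intro a _
              rw [Finset.mul_sum]
              exact Finset.sum_congr rfl fun j _ => by ring
            rw [h4, Finset.sum_congr rfl (fun a _ => by rw [h3 a]),
              ← Finset.sum_mul, hsumR0, zero_mul, neg_zero, neg_zero]
          · -- tight upper box row
            have h1 : MY.mulVec u (Sum.inr (Sum.inl j)) = u j := by
              simp only [hMYdef, Matrix.fromRows_mulVec, Sum.elim_inr, Sum.elim_inl,
                Matrix.one_mulVec]
            have h2 : dY (Sum.inr (Sum.inl j)) = (sn:ℝ) * ((hi' j:ℤ):ℝ) := rfl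
            rw [h1, h2, hwL j] at htight
            have h7 : wL j = (sn:ℤ) * hi' j := by exact_mod_cast htight
            have h3 := hL8 j (hi' j) h7
            show MY.mulVec z (Sum.inr (Sum.inl j)) = 0
            simp only [hMYdef, Matrix.fromRows_mulVec, Sum.elim_inr, Sum.elim_inl,
              Matrix.one_mulVec]
            rw [hzco j, Finset.sum_congr rfl (fun a _ => by rw [h3 a]),
              ← Finset.sum_mul, hsumL0, zero_mul]
          · -- tight lower box row
            have h1 : MY.mulVec u (Sum.inr (Sum.inr j)) = -u j := by
              simp only [hMYdef, Matrix.fromRows_mulVec, Sum.elim_inr,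
                Matrix.neg_mulVec, Matrix.one_mulVec, Pi.neg_apply]
            have h2 : dY (Sum.inr (Sum.inr j)) = -((sn:ℝ) * ((lo j:ℤ):ℝ)) := rfl
            rw [h1, h2, hwL j] at htight
            have h7 : wL j = (sn:ℤ) * lo j := by
              have h8 : ((wL j:ℤ):ℝ) = ((sn:ℤ) * lo j : ℤ) := by push_cast; linarith
              exact_mod_cast h8
            have h3 := hL8 j (lo j) h7
            show MY.mulVec z (Sum.inr (Sum.inr j)) = 0
            simp only [hMYdef, Matrix.fromRows_mulVec, Sum.elim_inr,
              Matrix.neg_mulVec, Matrix.one_mulVec, Pi.neg_apply]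
            rw [hzco j, Finset.sum_congr rfl (fun a _ => by rw [h3 a]),
              ← Finset.sum_mul, hsumL0, zero_mul, neg_zero]
        have hzRzero : ∑ a, lamR a • xR a = 0 := by rw [hzR, hz0, neg_zero]
        have hLzero : ∀ a', lamL a' = 0 := by
          apply (affineIndependent_iff_of_fintype ℝ xL).mp hL3 lamL hsumL0
          rw [Finset.weightedVSub_eq_weightedVSubOfPoint_of_sum_eq_zero _ _ _ hsumL0
            (0 : Fin n → ℝ), Finset.weightedVSubOfPoint_apply]
          simp only [vsub_eq_sub, sub_zero]
          rw [← hzdef]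
          exact hz0
        have hRzero : ∀ a', lamR a' = 0 := by
          apply (affineIndependent_iff_of_fintype ℝ xR).mp hR3 lamR hsumR0
          rw [Finset.weightedVSub_eq_weightedVSubOfPoint_of_sum_eq_zero _ _ _ hsumR0
            (0 : Fin n → ℝ), Finset.weightedVSubOfPoint_apply]
          simp only [vsub_eq_sub, sub_zero]
          exact hzRzero
        intro a
        refine Fin.addCases (motive := fun a => lam a = 0)
          (fun a' => hLzero a') (fun a' => hRzero a') a
      · intro a
        refine Fin.addCases (motive := fun a => 0 < (Fin.append cL cR) a)
          (fun a' => ?_) (fun a' => ?_) a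
        · simpa only [Fin.append_left] using hL4 a'
        · simpa only [Fin.append_right] using hR4 a'
      · rw [Fin.sum_univ_add]
        simp only [Fin.append_left, Fin.append_right]
        rw [hL5, hR5]
        omega
      · intro j
        rw [Fin.sum_univ_add]
        simp only [Fin.append_left, Fin.append_right]
        rw [← hL6 j, ← hR6 j]
        exact hwsum j
      · intro i hi a
        have e1 := FL i
        have e2 := FR i
        have esum : ∑ j, A i j * (w j:ℝ) =
            (∑ j, A i j * ((wL j:ℤ):ℝ)) + ∑ j, A i j * ((wR j:ℤ):ℝ) := by
          rw [← Finset.sum_add_distrib]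
          exact Finset.sum_congr rfl fun j _ => by rw [hwsum j]; ring
        have hkR' : (k:ℝ) = (sn:ℝ) + (rn:ℝ) := by exact_mod_cast hsnrn.symm
        have eL : ∑ j, A i j * ((wL j:ℤ):ℝ) = (sn:ℝ) * (b i:ℝ) := by
          rw [esum, hkR'] at hi
          linarith
        have eR : ∑ j, A i j * ((wR j:ℤ):ℝ) = (rn:ℝ) * (b i:ℝ) := by
          rw [esum, hkR'] at hi
          linarith
        refine Fin.addCases (motive := fun a => ∑ j, A i j * (Fin.append xL xR a) j = (b i:ℝ))
          (fun a' => ?_) (fun a' => ?_) a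
        · simpa only [Fin.append_left] using hL7 i eL a'
        · simpa only [Fin.append_right] using hR7 i eR a'
      · intro j z hz a
        have hjne : j ≠ j₀ := by
          intro hc
          subst hc
          exact hj₀ ⟨z, hz⟩
        have hdj : (k:ℤ) ∣ w j := ⟨z, hz⟩
        have hloz : lo j = z := by
          have h1 : w j % (k:ℤ) = 0 := by
            rw [hz]
            exact Int.mul_emod_right _ _
          have h2 := hlo_emod j
          rw [h1, add_zero, hz] at h2
          exact mul_left_cancel₀ hkZ.ne' h2
        have hhij : hi' j = lo j := by
          simp only [hhi'def, hhidef]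
          rw [if_neg hjne, if_pos hdj]
        have hwLj : wL j = (sn:ℤ) * z := by
          have h1 := (Fbox j).1
          have h2 := (Fbox j).2
          rw [hhij, hloz] at h2
          rw [hloz] at h1
          omega
        have hwRj : wR j = (rn:ℤ) * z := by
          show w j - wL j = _
          rw [hwLj, hz, hksnrn]
          ring
        refine Fin.addCases (motive := fun a => (Fin.append xL xR a) j = (z:ℝ))
          (fun a' => ?_) (fun a' => ?_) a
        · simpa only [Fin.append_left] using hL8 j z hwLj a'
        · simpa only [Fin.append_right] using hR8 j z hwRj a'


end TUICP

/-- A polyhedron `{x | Ax ≤ b}` defined by a totally unimodular matrix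
`A` and an integer vector `b` has the Integer Carathéodory Property. -/
theorem tu_hasICP {m n : ℕ} (A : Matrix (Fin m) (Fin n) ℝ)
    (hA : A.IsTotallyUnimodular) (b : Fin m → ℤ) :
    HasICP {x : Fin n → ℝ | ∀ i, ∑ j, A i j * x j ≤ (b i : ℝ)} := by
  intro k hk w hw
  rw [Set.mem_smul_set] at hw
  obtain ⟨v, hv, hvw⟩ := hw
  have hkR : (0:ℝ) ≤ (k:ℝ) := by positivity
  have hw' : ∀ i, ∑ j, A i j * (w j : ℝ) ≤ (k:ℝ) * (b i:ℝ) := by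
    intro i
    have h1 : ∀ j, (w j : ℝ) = (k:ℝ) * v j := by
      intro j
      have := congrFun hvw j
      simpa using this.symm
    calc ∑ j, A i j * (w j:ℝ) = (k:ℝ) * ∑ j, A i j * v j := by
          rw [Finset.mul_sum]
          exact Finset.sum_congr rfl fun j _ => by rw [h1 j]; ring
      _ ≤ (k:ℝ) * (b i:ℝ) := mul_le_mul_of_nonneg_left (hv i) hkR
  obtain ⟨t, x, c, h1, h2, h3, h4, h5, h6, _, _⟩ :=
    TUICP.main_decomp A hA b k hk w hw'
  refine ⟨t, x, c, fun a => h1 a, fun a => h2 a, h3, h4, h5, ?_⟩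
  funext j
  rw [h6 j, Finset.sum_apply]
  exact Finset.sum_congr rfl fun a _ => by simp
end

section
/- Let Â be an m × n totally unimodular matrix, let a be a row of Â, let b, c ∈ ℤᵐ, and define A := Â + c aᵀ. Let k be a positive integer, let w ∈ ℤⁿ, and write aᵀw = qk + r with q, r ∈ ℤ and 0 ≤ r ≤ k − 1. Then w ∈ k·P_{A,b} if and only if there exists y ∈ ℝⁿ satisfying Ây ≤ r(b − (q+1)c), Ây ≥ Âw + (k−r)(qc − b), and aᵀy = r(q+1). -/
open Finset Pointwise

variable {ι : Type*} [Fintype ι]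

section AuxNTU
open Matrix

lemma tu_signed_rows {m' ρ : Type*} {n : ℕ} {B : Matrix m' (Fin n) ℝ}
    (hB : B.IsTotallyUnimodular) {M : Matrix ρ (Fin n) ℝ}
    (h : ∀ i, ∃ i' : m', ∃ ε : ℝ, (ε = 1 ∨ ε = -1) ∧ M i = ε • B i') :
    M.IsTotallyUnimodular := by
  rw [Matrix.isTotallyUnimodular_iff]
  intro k f g
  choose i' ε hε hrow using h
  have hsub : M.submatrix f g =
      Matrix.of (fun a b : Fin k => ε (f a) * (B.submatrix (fun a => i' (f a)) g) a b) := by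
    ext a b
    have := congrFun (hrow (f a)) (g b)
    simpa [Matrix.submatrix_apply] using this
  rw [hsub, Matrix.det_mul_column]
  have hprod : (∏ a : Fin k, ε (f a)) = 1 ∨ (∏ a : Fin k, ε (f a)) = -1 := by
    refine Finset.prod_induction _ (fun x => x = 1 ∨ x = -1) ?_ (Or.inl rfl) ?_
    · rintro x y (rfl | rfl) (rfl | rfl) <;> simp
    · intro a _; exact hε (f a)
  obtain ⟨s, hs⟩ := (Matrix.isTotallyUnimodular_iff B).mp hB k (fun a => i' (f a)) g
  rcases hprod with hp | hp
  · exact ⟨s, by rw [hp, one_mul]; exact hs⟩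
  · exact ⟨-s, by rw [hp]; push_cast; rw [← hs]; ring⟩

lemma tu_entries_int {m' : Type*} {n : ℕ} {B : Matrix m' (Fin n) ℝ}
    (hB : B.IsTotallyUnimodular) (i : m') (j : Fin n) : ∃ z : ℤ, B i j = (z : ℝ) := by
  obtain ⟨s, hs⟩ := hB.apply i j
  cases s with
  | zero => exact ⟨0, by simp [← hs]⟩
  | pos => exact ⟨1, by simp [← hs]⟩
  | neg => exact ⟨-1, by simp [← hs]⟩

lemma int_solve {n : ℕ} {B : Matrix (Fin n) (Fin n) ℝ} (hent : ∀ i j, ∃ z : ℤ, B i j = (z : ℝ))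
    (hdet : B.det = 1 ∨ B.det = -1) {x : Fin n → ℝ} {d : Fin n → ℝ}
    (hd : ∀ i, ∃ z : ℤ, d i = (z : ℝ)) (hBx : B *ᵥ x = d) : IsIntegerVec x := by
  classical
  choose B0 hB0 using hent
  choose d0 hd0 using hd
  have hBmap : B = (Matrix.of B0).map (Int.cast : ℤ → ℝ) := by
    ext i j; simp [hB0]
  have key : B.det • x = B.adjugate *ᵥ d := by
    rw [← hBx, Matrix.mulVec_mulVec, Matrix.adjugate_mul, Matrix.smul_mulVec,
      Matrix.one_mulVec]
  have hadj : B.adjugate = ((Matrix.of B0).adjugate).map (Int.cast : ℤ → ℝ) := by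
    rw [hBmap]
    have := (Int.castRingHom ℝ).map_adjugate (Matrix.of B0)
    exact this.symm
  intro j
  have hxj : B.det * x j = (((Matrix.of B0).adjugate *ᵥ d0) j : ℝ) := by
    have := congrFun key j
    simp only [Pi.smul_apply, smul_eq_mul] at this
    rw [this, hadj]
    simp [Matrix.mulVec, dotProduct, hd0, Matrix.map_apply]
  rcases hdet with h1 | h1
  · exact ⟨((Matrix.of B0).adjugate *ᵥ d0) j, by rw [← hxj, h1, one_mul]⟩
  · exact ⟨-(((Matrix.of B0).adjugate *ᵥ d0) j), by rw [Int.cast_neg, ← hxj, h1]; ring⟩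

lemma span_top_of_forall {n : ℕ} {T : Set (Fin n → ℝ)}
    (h : ∀ v : Fin n → ℝ, v ≠ 0 → ∃ u ∈ T, (∑ j, u j * v j) ≠ 0) :
    Submodule.span ℝ T = ⊤ := by
  by_contra hne
  obtain ⟨φ, hφ0, hφ⟩ := Submodule.exists_dual_map_eq_bot_of_lt_top
    (lt_top_iff_ne_top.mpr hne) inferInstance
  set v : Fin n → ℝ := fun j => φ (Pi.single j 1) with hv
  have hφeval : ∀ u : Fin n → ℝ, φ u = ∑ j, u j * v j := by
    intro u
    have hu : u = ∑ j, Pi.single j (u j) := (Finset.univ_sum_single u).symm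
    calc φ u = φ (∑ j, Pi.single j (u j)) := by rw [← hu]
    _ = ∑ j, φ (Pi.single j (u j)) := map_sum φ _ _
    _ = ∑ j, u j * v j := by
        refine Finset.sum_congr rfl fun j _ => ?_
        have : Pi.single j (u j) = u j • (Pi.single j (1 : ℝ) : Fin n → ℝ) := by
          ext j'; by_cases hj : j' = j <;> simp [Pi.single_apply, hj]
        rw [this, _root_.map_smul]; simp [hv]
  have hvne : v ≠ 0 := by
    intro hv0
    refine hφ0 (LinearMap.ext fun u => ?_)
    rw [hφeval u, hv0]
    simp
  obtain ⟨u, huT, hune⟩ := h v hvne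
  apply hune
  rw [← hφeval u]
  have : φ u ∈ Submodule.map φ (Submodule.span ℝ T) :=
    Submodule.mem_map_of_mem (Submodule.subset_span huT)
  rw [hφ] at this
  simpa using this

lemma extreme_integral {n : ℕ} {ρ : Type*} [Fintype ρ] {M : Matrix ρ (Fin n) ℝ}
    (hM : M.IsTotallyUnimodular) (d : ρ → ℤ) {x : Fin n → ℝ}
    (hx : x ∈ Set.extremePoints ℝ {y : Fin n → ℝ | ∀ i, ∑ j, M i j * y j ≤ (d i : ℝ)}) :
    IsIntegerVec x := by
  classical
  rw [mem_extremePoints] at hx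
  obtain ⟨hxP, hext⟩ := hx
  simp only [Set.mem_setOf_eq] at hxP
  set T : Set ρ := {i | ∑ j, M i j * x j = (d i : ℝ)} with hT
  -- Step 1: no nonzero direction orthogonal to all tight rows
  have step1 : ∀ v : Fin n → ℝ, (∀ i ∈ T, ∑ j, M i j * v j = 0) → v = 0 := by
    intro v hv
    by_contra hvne
    set g : ρ → ℝ := fun i =>
      ((d i : ℝ) - ∑ j, M i j * x j) / (|∑ j, M i j * v j| + 1) with hg
    set F := (Finset.univ.filter (fun i : ρ => i ∉ T)).image g with hF
    set ε : ℝ := (insert (1:ℝ) F).min' (insert_nonempty _ _) with hε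
    have habs : ∀ i : ρ, (0:ℝ) < |∑ j, M i j * v j| + 1 := by
      intro i; positivity
    have hgpos : ∀ i : ρ, i ∉ T → 0 < g i := by
      intro i hi
      apply div_pos _ (habs i)
      have := hxP i
      have hne : ∑ j, M i j * x j ≠ (d i : ℝ) := hi
      cases lt_or_eq_of_le this with
      | inl h => linarith
      | inr h => exact absurd h hne
    have hεpos : 0 < ε := by
      rw [hε, Finset.lt_min'_iff]
      intro b hb
      rcases Finset.mem_insert.mp hb with rfl | hb
      · norm_num
      · obtain ⟨i, hi, rfl⟩ := Finset.mem_image.mp hb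
        exact hgpos i (Finset.mem_filter.mp hi).2
    have hεle : ∀ i : ρ, i ∉ T → ε ≤ g i := by
      intro i hi
      apply Finset.min'_le
      exact Finset.mem_insert.mpr (Or.inr (Finset.mem_image.mpr
        ⟨i, Finset.mem_filter.mpr ⟨Finset.mem_univ i, hi⟩, rfl⟩))
    have key : ∀ (σ : ℝ), σ = 1 ∨ σ = -1 →
        (∀ i, ∑ j, M i j * (x j + σ * ε * v j) ≤ (d i : ℝ)) := by
      intro σ hσ i
      have hexp : ∑ j, M i j * (x j + σ * ε * v j)
          = (∑ j, M i j * x j) + σ * ε * ∑ j, M i j * v j := by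
        rw [Finset.mul_sum]
        rw [← Finset.sum_add_distrib]
        congr 1; ext j; ring
      rw [hexp]
      by_cases hiT : i ∈ T
      · rw [hv i hiT, mul_zero]
        have : ∑ j, M i j * x j = (d i : ℝ) := hiT
        linarith
      · have hslack : 0 < (d i : ℝ) - ∑ j, M i j * x j := by
          have := hxP i
          have hne : ∑ j, M i j * x j ≠ (d i : ℝ) := hiT
          cases lt_or_eq_of_le this with
          | inl h => linarith
          | inr h => exact absurd h hne
        have h1 : σ * ε * ∑ j, M i j * v j ≤ ε * |∑ j, M i j * v j| := by
          rcases hσ with rfl | rfl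
          · rw [one_mul]
            calc ε * ∑ j, M i j * v j ≤ ε * |∑ j, M i j * v j| := by
                  apply mul_le_mul_of_nonneg_left (le_abs_self _) hεpos.le
            _ = _ := rfl
          · have : -(ε * ∑ j, M i j * v j) ≤ ε * |∑ j, M i j * v j| := by
              rw [← mul_neg]
              apply mul_le_mul_of_nonneg_left (neg_le_abs _) hεpos.le
            linarith
        have h2 : ε * |∑ j, M i j * v j| < (d i : ℝ) - ∑ j, M i j * x j := by
          calc ε * |∑ j, M i j * v j| ≤ g i * |∑ j, M i j * v j| := by
                apply mul_le_mul_of_nonneg_right (hεle i hiT) (abs_nonneg _)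
          _ = ((d i : ℝ) - ∑ j, M i j * x j) * (|∑ j, M i j * v j| / (|∑ j, M i j * v j| + 1)) := by
                rw [hg]; ring
          _ < ((d i : ℝ) - ∑ j, M i j * x j) * 1 := by
                apply mul_lt_mul_of_pos_left _ hslack
                rw [div_lt_one (habs i)]
                linarith
          _ = _ := by ring
        linarith
    have hmem1 := key 1 (Or.inl rfl)
    have hmem2 := key (-1) (Or.inr rfl)
    have hseg : x ∈ openSegment ℝ (fun j => x j + 1 * ε * v j) (fun j => x j + (-1) * ε * v j) := by
      refine ⟨1/2, 1/2, by norm_num, by norm_num, by norm_num, ?_⟩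
      ext j
      simp only [Pi.add_apply, Pi.smul_apply, smul_eq_mul]
      ring
    have := hext _ hmem1 _ hmem2 hseg
    have h0 : (fun j => x j + 1 * ε * v j) = x := this.1
    have : ∀ j, v j = 0 := by
      intro j
      have := congrFun h0 j
      have hεne : ε ≠ 0 := ne_of_gt hεpos
      nlinarith [congrFun h0 j]
    exact hvne (funext this)
  -- Step 2: tight rows span everything
  have step2 : Submodule.span ℝ {u : Fin n → ℝ | ∃ i ∈ T, (fun j => M i j) = u} = ⊤ := by
    apply span_top_of_forall
    intro v hvne
    by_contra hcon
    push_neg at hcon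
    apply hvne
    apply step1 v
    intro i hiT
    exact hcon (fun j => M i j) ⟨i, hiT, rfl⟩
  -- Step 3: extract a basis of tight rows
  obtain ⟨bset, hbsub, hbspan, hbind⟩ :=
    exists_linearIndependent ℝ {u : Fin n → ℝ | ∃ i ∈ T, (fun j => M i j) = u}
  rw [step2] at hbspan
  have hfin : Finite bset := hbind.finite
  have : Fintype bset := Fintype.ofFinite _
  have hbasis : Module.Basis bset ℝ (Fin n → ℝ) := Module.Basis.mk hbind (by rw [Subtype.range_coe, hbspan])
  have hcard : Fintype.card bset = n := by
    have := Module.finrank_eq_card_basis hbasis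
    rw [Module.finrank_fin_fun] at this
    omega
  have e : Fin n ≃ bset := (Fintype.equivFinOfCardEq hcard).symm
  have hchoose : ∀ u : bset, ∃ i, i ∈ T ∧ (fun j => M i j) = (u : Fin n → ℝ) := fun u => hbsub u.2
  choose idx hidxT hidxM using hchoose
  set f : Fin n → ρ := fun a => idx (e a) with hf
  have hrowf : ∀ a, (fun j => M (f a) j) = ((e a : Fin n → ℝ)) := fun a => hidxM (e a)
  have hfinj : Function.Injective f := by
    intro a₁ a₂ hfa
    have : ((e a₁ : Fin n → ℝ)) = ((e a₂ : Fin n → ℝ)) := by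
      rw [← hrowf a₁, ← hrowf a₂]
      exact congrArg (fun i : ρ => (fun j => M i j)) hfa
    exact e.injective (Subtype.ext this)
  set B : Matrix (Fin n) (Fin n) ℝ := M.submatrix f id with hB
  have hBrows : LinearIndependent ℝ (fun a : Fin n => (fun j => B a j)) := by
    have : (fun a : Fin n => (fun j => B a j)) = (Subtype.val ∘ e) := by
      ext a j
      have := congrFun (hrowf a) j
      simpa [hB, Matrix.submatrix_apply] using this
    rw [this]
    exact hbind.comp e e.injective
  have hdetne : B.det ≠ 0 := by
    intro hdet0
    have hdetT : Bᵀ.det = 0 := by rw [Matrix.det_transpose]; exact hdet0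
    obtain ⟨v, hvne, hv0⟩ := Matrix.exists_mulVec_eq_zero_iff.mpr hdetT
    have : ∀ a, v a = 0 := by
      have hcomb : ∑ a, v a • (fun j => B a j) = 0 := by
        ext j
        have := congrFun hv0 j
        simp only [Matrix.mulVec, dotProduct, Matrix.transpose_apply] at this
        simpa [Finset.sum_apply, mul_comm] using this
      exact Fintype.linearIndependent_iff.mp hBrows v hcomb
    exact hvne (funext this)
  have hdet : B.det = 1 ∨ B.det = -1 := by
    obtain ⟨s, hs⟩ := hM n f id hfinj Function.injective_id
    rw [← hB] at hs
    cases s with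
    | zero => exact absurd hs.symm (by simpa using hdetne)
    | pos => left; rw [← hs]; simp
    | neg => right; rw [← hs]; simp
  have hBx : B *ᵥ x = fun a => ((d (f a) : ℤ) : ℝ) := by
    ext a
    have : ∑ j, M (f a) j * x j = ((d (f a) : ℤ) : ℝ) := hidxT (e a)
    simpa [Matrix.mulVec, dotProduct, hB, Matrix.submatrix_apply] using this
  exact int_solve (fun i j => tu_entries_int hM (f i) j) hdet
    (fun a => ⟨d (f a), rfl⟩) hBx

lemma hoffman_kruskal {n : ℕ} {ρ : Type*} [Fintype ρ] {M : Matrix ρ (Fin n) ℝ}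
    (hM : M.IsTotallyUnimodular) (d : ρ → ℤ) {x₀ : Fin n → ℝ}
    (hx₀ : ∀ i, ∑ j, M i j * x₀ j ≤ (d i : ℝ)) :
    x₀ ∈ convexHull ℝ {x : Fin n → ℝ | IsIntegerVec x ∧ ∀ i, ∑ j, M i j * x j ≤ (d i : ℝ)} := by
  classical
  set M' : Matrix (ρ ⊕ (Fin n ⊕ Fin n)) (Fin n) ℝ := Matrix.of (Sum.elim (fun i => M i)
    (Sum.elim (fun j0 => (fun j => if j0 = j then (1:ℝ) else 0))
      (fun j0 => (fun j => if j0 = j then (-1:ℝ) else 0)))) with hM'def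
  set d' : (ρ ⊕ (Fin n ⊕ Fin n)) → ℤ :=
    Sum.elim d (Sum.elim (fun j0 => ⌈x₀ j0⌉) (fun j0 => -⌊x₀ j0⌋)) with hd'def
  have hrow1 : ∀ (j0 : Fin n) (x : Fin n → ℝ),
      (∑ j, (if j0 = j then (1:ℝ) else 0) * x j) = x j0 := by
    intro j0 x
    rw [Finset.sum_eq_single j0]
    · simp
    · intro b _ hb; simp [Ne.symm hb]
    · intro h; exact absurd (Finset.mem_univ j0) h
  have hrow2 : ∀ (j0 : Fin n) (x : Fin n → ℝ),
      (∑ j, (if j0 = j then (-1:ℝ) else 0) * x j) = -x j0 := by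
    intro j0 x
    rw [Finset.sum_eq_single j0]
    · simp
    · intro b _ hb; simp [Ne.symm hb]
    · intro h; exact absurd (Finset.mem_univ j0) h
  set P' : Set (Fin n → ℝ) := {x | ∀ i, ∑ j, M' i j * x j ≤ (d' i : ℝ)} with hP'def
  have hM'tu : M'.IsTotallyUnimodular := by
    apply tu_signed_rows ((Matrix.fromRows_one_isTotallyUnimodular_iff M).mpr hM)
    rintro (i | j0 | j0)
    · exact ⟨Sum.inl i, 1, Or.inl rfl, by ext j; simp [hM'def]⟩
    · refine ⟨Sum.inr j0, 1, Or.inl rfl, ?_⟩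
      ext j
      simp [hM'def, Matrix.one_apply]
    · refine ⟨Sum.inr j0, -1, Or.inr rfl, ?_⟩
      ext j
      by_cases h : j0 = j <;> simp [hM'def, Matrix.one_apply, h]
  have hconv : Convex ℝ P' := by
    intro x hx y hy a b ha hb hab
    intro i
    have hexp : ∑ j, M' i j * (a * x j + b * y j)
        = a * (∑ j, M' i j * x j) + b * (∑ j, M' i j * y j) := by
      rw [Finset.mul_sum, Finset.mul_sum, ← Finset.sum_add_distrib]
      congr 1; ext j; ring
    have : ∑ j, M' i j * (a • x + b • y) j ≤ (d' i : ℝ) := by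
      simp only [Pi.add_apply, Pi.smul_apply, smul_eq_mul]
      rw [hexp]
      calc a * (∑ j, M' i j * x j) + b * (∑ j, M' i j * y j)
          ≤ a * (d' i : ℝ) + b * (d' i : ℝ) := by
            apply add_le_add
            · exact mul_le_mul_of_nonneg_left (hx i) ha
            · exact mul_le_mul_of_nonneg_left (hy i) hb
      _ = (d' i : ℝ) := by rw [← add_mul, hab, one_mul]
    exact this
  have hclosed : IsClosed P' := by
    have : P' = ⋂ i, {x : Fin n → ℝ | ∑ j, M' i j * x j ≤ (d' i : ℝ)} := by
      ext x; simp [hP'def, Set.mem_iInter]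
    rw [this]
    apply isClosed_iInter
    intro i
    apply isClosed_le _ continuous_const
    exact continuous_finset_sum _ (fun j _ => continuous_const.mul (continuous_apply j))
  have hsubIcc : P' ⊆ Set.Icc (fun j => (⌊x₀ j⌋ : ℝ)) (fun j => (⌈x₀ j⌉ : ℝ)) := by
    intro x hx
    constructor
    · intro j0
      have := hx (Sum.inr (Sum.inr j0))
      simp only [hM'def, hd'def, Sum.elim_inr, Sum.elim_inl, Matrix.of_apply] at this
      rw [hrow2 j0 x] at this
      push_cast at this
      linarith
    · intro j0
      have := hx (Sum.inr (Sum.inl j0))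
      simp only [hM'def, hd'def, Sum.elim_inr, Sum.elim_inl, Matrix.of_apply] at this
      rw [hrow1 j0 x] at this
      exact this
  have hcompact : IsCompact P' :=
    IsCompact.of_isClosed_subset isCompact_Icc hclosed hsubIcc
  have hx₀P' : x₀ ∈ P' := by
    rintro (i | j0 | j0)
    · simpa [hM'def, hd'def] using hx₀ i
    · simp only [hM'def, hd'def, Sum.elim_inr, Sum.elim_inl, Matrix.of_apply]
      rw [hrow1 j0 x₀]
      exact Int.le_ceil _
    · simp only [hM'def, hd'def, Sum.elim_inr, Sum.elim_inl, Matrix.of_apply]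
      rw [hrow2 j0 x₀]
      push_cast
      have := Int.floor_le (x₀ j0)
      linarith
  have hKM := closure_convexHull_extremePoints hcompact hconv
  have hx₀cl : x₀ ∈ closure (convexHull ℝ (Set.extremePoints ℝ P')) := by
    rw [hKM]; exact hx₀P'
  set IP : Set (Fin n → ℝ) := {x | x ∈ P' ∧ IsIntegerVec x} with hIPdef
  have hext_sub : Set.extremePoints ℝ P' ⊆ IP := by
    intro z hz
    exact ⟨extremePoints_subset hz, extreme_integral hM'tu d' hz⟩
  have hIPfin : IP.Finite := by
    have hbox : (Set.univ.pi fun j : Fin n => Set.Icc (⌊x₀ j⌋) (⌈x₀ j⌉)).Finite :=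
      Set.Finite.pi (fun j => Set.finite_Icc _ _)
    apply Set.Finite.subset (hbox.image (fun z : Fin n → ℤ => (fun j => (z j : ℝ))))
    intro x hx
    obtain ⟨hxP', hxint⟩ := hx
    choose z hz using hxint
    refine ⟨z, ?_, by ext j; exact (hz j).symm⟩
    intro j _
    obtain ⟨h1, h2⟩ := hsubIcc hxP'
    constructor
    · have h1j : ((⌊x₀ j⌋ : ℤ) : ℝ) ≤ ((z j : ℤ) : ℝ) := by
        have := h1 j; rw [hz j] at this; simpa using this
      exact_mod_cast h1j
    · have h2j : ((z j : ℤ) : ℝ) ≤ ((⌈x₀ j⌉ : ℤ) : ℝ) := by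
        have := h2 j; rw [hz j] at this; simpa using this
      exact_mod_cast h2j
  have hclconv : closure (convexHull ℝ (Set.extremePoints ℝ P')) ⊆ convexHull ℝ IP := by
    apply closure_minimal
    · exact convexHull_mono hext_sub
    · exact hIPfin.isClosed_convexHull ℝ
  have hfinal : convexHull ℝ IP ⊆
      convexHull ℝ {x : Fin n → ℝ | IsIntegerVec x ∧ ∀ i, ∑ j, M i j * x j ≤ (d i : ℝ)} := by
    apply convexHull_mono
    rintro x ⟨hxP', hxint⟩
    refine ⟨hxint, fun i => ?_⟩
    simpa [hM'def, hd'def] using hxP' (Sum.inl i)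
  exact hfinal (hclconv hx₀cl)

set_option maxHeartbeats 1600000 in
lemma exists_nu {α : Type*} (t : Finset α) (μ : α → ℝ) (s : α → ℤ)
    (k : ℕ) (q r : ℤ)
    (hμ0 : ∀ i ∈ t, 0 ≤ μ i) (hμk : ∑ i ∈ t, μ i = (k : ℝ))
    (hμs : ∑ i ∈ t, μ i * (s i : ℝ) = (q : ℝ) * k + r)
    (hk : 0 < k) (hr0 : 0 ≤ r) (hrk : r ≤ (k : ℤ) - 1) :
    ∃ ν : α → ℝ, (∀ i ∈ t, 0 ≤ ν i ∧ ν i ≤ μ i) ∧ (∑ i ∈ t, ν i = (r : ℝ)) ∧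
      (∑ i ∈ t, ν i * (s i : ℝ) = (r : ℝ) * ((q : ℝ) + 1)) := by
  classical
  rcases eq_or_lt_of_le hr0 with hr0' | hrpos
  · refine ⟨0, fun i hi => ⟨le_rfl, hμ0 i hi⟩, by simp [← hr0'], by simp [← hr0']⟩
  have hr1 : (1 : ℝ) ≤ (r : ℝ) := by exact_mod_cast hrpos
  have hkR : (0 : ℝ) < (k : ℝ) := by exact_mod_cast hk
  have hrkR : (r : ℝ) ≤ (k : ℝ) - 1 := by
    have : ((r : ℤ) : ℝ) ≤ (((k : ℤ) - 1 : ℤ) : ℝ) := by exact_mod_cast hrk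
    push_cast at this; linarith
  set H := t.filter (fun i => q + 1 ≤ s i) with hH
  set L := t.filter (fun i => ¬(q + 1 ≤ s i)) with hL
  have hHt : ∀ i ∈ H, i ∈ t := fun i hi => (Finset.mem_filter.mp hi).1
  have hLt : ∀ i ∈ L, i ∈ t := fun i hi => (Finset.mem_filter.mp hi).1
  have hHs' : ∀ i ∈ H, (q : ℝ) + 1 ≤ (s i : ℝ) := by
    intro i hi
    have := (Finset.mem_filter.mp hi).2
    exact_mod_cast this
  have hLs' : ∀ i ∈ L, (s i : ℝ) ≤ (q : ℝ) := by
    intro i hi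
    have h2 := (Finset.mem_filter.mp hi).2
    have : s i ≤ q := by omega
    exact_mod_cast this
  set h := ∑ i ∈ H, μ i with hh
  clear_value h
  have hsplit_mu : h + ∑ i ∈ L, μ i = (k : ℝ) := by
    rw [hh, hL, hH, Finset.sum_filter_add_sum_filter_not, hμk]
  have hsplit_s : (∑ i ∈ H, μ i * (s i : ℝ)) + ∑ i ∈ L, μ i * (s i : ℝ)
      = (q : ℝ) * k + r := by
    rw [hL, hH, Finset.sum_filter_add_sum_filter_not, hμs]
  have hh0 : 0 ≤ h := by
    rw [hh]; exact Finset.sum_nonneg (fun i hi => hμ0 i (hHt i hi))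
  have hHge : ((q : ℝ) + 1) * h ≤ ∑ i ∈ H, μ i * (s i : ℝ) := by
    rw [hh, Finset.mul_sum]
    apply Finset.sum_le_sum
    intro i hi
    have := hμ0 i (hHt i hi)
    nlinarith [hHs' i hi]
  have hLle : ∑ i ∈ L, μ i * (s i : ℝ) ≤ (q : ℝ) * ∑ i ∈ L, μ i := by
    rw [Finset.mul_sum]
    apply Finset.sum_le_sum
    intro i hi
    have := hμ0 i (hLt i hi)
    nlinarith [hLs' i hi]
  -- the low combination ν₂
  set ν₂ : α → ℝ := fun i => ((r : ℝ) / k) * μ i with hν₂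
  clear_value ν₂
  have hrk0 : 0 ≤ (r : ℝ) / k := by positivity
  have hrk1 : (r : ℝ) / k ≤ 1 := by rw [div_le_one hkR]; linarith
  have hν₂b : ∀ i ∈ t, 0 ≤ ν₂ i ∧ ν₂ i ≤ μ i := by
    intro i hi
    have := hμ0 i hi
    simp only [hν₂]
    refine ⟨mul_nonneg hrk0 this, ?_⟩
    nlinarith [mul_le_mul_of_nonneg_right hrk1 this]
  have hν₂sum : ∑ i ∈ t, ν₂ i = (r : ℝ) := by
    rw [hν₂, ← Finset.mul_sum, hμk]
    field_simp
  have hν₂val : ∑ i ∈ t, ν₂ i * (s i : ℝ) = ((r : ℝ) / k) * ((q : ℝ) * k + r) := by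
    simp only [hν₂, mul_assoc]
    rw [← Finset.mul_sum, hμs]
  have hν₂le : ∑ i ∈ t, ν₂ i * (s i : ℝ) ≤ (r : ℝ) * ((q : ℝ) + 1) := by
    rw [hν₂val, div_mul_eq_mul_div, div_le_iff₀ hkR]
    nlinarith
  -- the high combination ν₁
  have hν₁ : ∃ ν₁ : α → ℝ, (∀ i ∈ t, 0 ≤ ν₁ i ∧ ν₁ i ≤ μ i) ∧ (∑ i ∈ t, ν₁ i = (r : ℝ)) ∧
      (r : ℝ) * ((q : ℝ) + 1) ≤ ∑ i ∈ t, ν₁ i * (s i : ℝ) := by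
    rcases le_or_gt (r : ℝ) h with hrh | hrh
    · -- enough high mass
      have hhpos : 0 < h := lt_of_lt_of_le (by linarith) hrh
      have hrh1 : (r : ℝ) / h ≤ 1 := by rw [div_le_one hhpos]; exact hrh
      have hrh0 : 0 ≤ (r : ℝ) / h := by positivity
      refine ⟨fun i => if q + 1 ≤ s i then ((r : ℝ) / h) * μ i else 0, ?_, ?_, ?_⟩
      · intro i hi
        have hμi := hμ0 i hi
        by_cases hc : q + 1 ≤ s i
        · simp only [if_pos hc]
          exact ⟨mul_nonneg hrh0 hμi, by nlinarith⟩
        · simp only [if_neg hc]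
          exact ⟨le_rfl, hμi⟩
      · rw [Finset.sum_ite, Finset.sum_const_zero, add_zero, ← hH, ← Finset.mul_sum, ← hh]
        field_simp
      · have hsum : ∑ i ∈ t, (if q + 1 ≤ s i then ((r : ℝ) / h) * μ i else 0) * (s i : ℝ)
            = ((r : ℝ) / h) * ∑ i ∈ H, μ i * (s i : ℝ) := by
          rw [Finset.sum_congr rfl
            (fun i _ => show (if q + 1 ≤ s i then ((r : ℝ) / h) * μ i else 0) * (s i : ℝ)
              = (if q + 1 ≤ s i then ((r : ℝ) / h) * (μ i * (s i : ℝ)) else 0) from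
              by split <;> ring)]
          rw [Finset.sum_ite, Finset.sum_const_zero, add_zero, ← hH, ← Finset.mul_sum]
        rw [hsum]
        have h1 : ((r : ℝ) / h) * (((q : ℝ) + 1) * h) ≤ ((r : ℝ) / h) * ∑ i ∈ H, μ i * (s i : ℝ) :=
          mul_le_mul_of_nonneg_left hHge hrh0
        have h2 : ((r : ℝ) / h) * (((q : ℝ) + 1) * h) = (r : ℝ) * ((q : ℝ) + 1) := by
          field_simp
        linarith
    · -- not enough high mass
      have hkh : 0 < (k : ℝ) - h := by linarith
      set c : ℝ := ((r : ℝ) - h) / ((k : ℝ) - h) with hc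
      clear_value c
      have hc0 : 0 ≤ c := by
        rw [hc]
        apply div_nonneg _ hkh.le
        linarith
      have hc1 : c ≤ 1 := by
        rw [hc, div_le_one hkh]
        linarith
      have hckh : c * ((k : ℝ) - h) = (r : ℝ) - h := by
        rw [hc, div_mul_cancel₀ _ (ne_of_gt hkh)]
      refine ⟨fun i => if q + 1 ≤ s i then μ i else c * μ i, ?_, ?_, ?_⟩
      · intro i hi
        have hμi := hμ0 i hi
        by_cases hcc : q + 1 ≤ s i
        · simp only [if_pos hcc]; exact ⟨hμi, le_rfl⟩
        · simp only [if_neg hcc]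
          exact ⟨mul_nonneg hc0 hμi, by nlinarith⟩
      · rw [Finset.sum_ite, ← hH, ← hL, ← Finset.mul_sum, ← hh]
        have hsumL : ∑ i ∈ L, μ i = (k : ℝ) - h := by linarith
        rw [hsumL]
        linarith [hckh]
      · have hsum : ∑ i ∈ t, (if q + 1 ≤ s i then μ i else c * μ i) * (s i : ℝ)
            = (∑ i ∈ H, μ i * (s i : ℝ)) + c * ∑ i ∈ L, μ i * (s i : ℝ) := by
          rw [Finset.sum_congr rfl
            (fun i _ => show (if q + 1 ≤ s i then μ i else c * μ i) * (s i : ℝ)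
              = (if q + 1 ≤ s i then μ i * (s i : ℝ) else c * (μ i * (s i : ℝ))) from
              by split <;> ring)]
          rw [Finset.sum_ite, ← hH, ← hL, ← Finset.mul_sum]
        rw [hsum]
        set SLmu := ∑ i ∈ L, μ i with hSLmu
        clear_value SLmu
        set SH := ∑ i ∈ H, μ i * (s i : ℝ) with hSHd
        clear_value SH
        set SL := ∑ i ∈ L, μ i * (s i : ℝ) with hSLd
        clear_value SL
        have hsumL : SLmu = (k : ℝ) - h := by linarith
        have hLle' : SL ≤ (q : ℝ) * ((k : ℝ) - h) := by
          rw [← hsumL]; exact hLle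
        have h1c : 0 ≤ 1 - c := by linarith
        have hkey : (1 - c) * SL ≤ (1 - c) * ((q : ℝ) * ((k : ℝ) - h)) :=
          mul_le_mul_of_nonneg_left hLle' h1c
        have hq : (q : ℝ) * (c * ((k : ℝ) - h)) = (q : ℝ) * ((r : ℝ) - h) := by rw [hckh]
        have hexp : (1 - c) * ((q : ℝ) * ((k : ℝ) - h))
            = (q : ℝ) * (k : ℝ) - (q : ℝ) * (r : ℝ) := by
          have h3 : (1 - c) * ((q : ℝ) * ((k : ℝ) - h))
              = (q : ℝ) * ((k : ℝ) - h) - (q : ℝ) * (c * ((k : ℝ) - h)) := by ring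
          rw [h3, hq]; ring
        have h2 : (1 - c) * SL = SL - c * SL := by ring
        rw [h2, hexp] at hkey
        linarith [hsplit_s, hkey]
  obtain ⟨ν₁, hν₁b, hν₁sum, hν₁ge⟩ := hν₁
  set f₁ := ∑ i ∈ t, ν₁ i * (s i : ℝ) with hf₁
  clear_value f₁
  set f₂ := ∑ i ∈ t, ν₂ i * (s i : ℝ) with hf₂
  clear_value f₂
  rcases le_or_gt f₁ f₂ with hle | hlt
  · have hval : f₂ = (r : ℝ) * ((q : ℝ) + 1) := le_antisymm hν₂le (le_trans hν₁ge hle)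
    refine ⟨ν₂, hν₂b, hν₂sum, ?_⟩
    rw [← hf₂]
    exact hval
  · set θ := ((r : ℝ) * ((q : ℝ) + 1) - f₂) / (f₁ - f₂) with hθ
    clear_value θ
    have hd12 : 0 < f₁ - f₂ := sub_pos.mpr hlt
    have hθ0 : 0 ≤ θ := by
      rw [hθ]
      exact div_nonneg (sub_nonneg.mpr hν₂le) hd12.le
    have hθ1 : θ ≤ 1 := by
      rw [hθ, div_le_one hd12]
      exact sub_le_sub_right hν₁ge f₂
    refine ⟨fun i => θ * ν₁ i + (1 - θ) * ν₂ i, ?_, ?_, ?_⟩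
    · intro i hi
      obtain ⟨h1a, h1b⟩ := hν₁b i hi
      obtain ⟨h2a, h2b⟩ := hν₂b i hi
      constructor
      · exact add_nonneg (mul_nonneg hθ0 h1a) (mul_nonneg (sub_nonneg.mpr hθ1) h2a)
      · calc θ * ν₁ i + (1 - θ) * ν₂ i ≤ θ * μ i + (1 - θ) * μ i :=
              add_le_add (mul_le_mul_of_nonneg_left h1b hθ0)
                (mul_le_mul_of_nonneg_left h2b (sub_nonneg.mpr hθ1))
        _ = μ i := by ring
    · rw [Finset.sum_add_distrib, ← Finset.mul_sum, ← Finset.mul_sum, hν₁sum, hν₂sum]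
      ring
    · have hcomb : ∑ i ∈ t, (θ * ν₁ i + (1 - θ) * ν₂ i) * (s i : ℝ)
          = θ * f₁ + (1 - θ) * f₂ := by
        rw [hf₁, hf₂, Finset.mul_sum, Finset.mul_sum, ← Finset.sum_add_distrib]
        apply Finset.sum_congr rfl
        intro i _
        ring
      rw [hcomb, hθ]
      have hne : f₁ - f₂ ≠ 0 := ne_of_gt hd12
      field_simp
      ring


end AuxNTU

set_option maxHeartbeats 3200000 in
/-- Membership criterion for `k·P_{A,b}` where `A = Â + caᵀ` is a
nearly totally unimodular matrix (`Â` TU, `a` the row `i₀` of `Â`, `c` integral):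
`w ∈ k·P_{A,b}` iff the system `Ây ≤ r(b - (q+1)c)`, `Ây ≥ Âw + (k-r)(qc - b)`,
`aᵀy = r(q+1)` is feasible, where `aᵀw = qk + r`, `0 ≤ r ≤ k-1`. -/
theorem ntu_membership {m n : ℕ} (Ahat : Matrix (Fin m) (Fin n) ℝ)
    (hAhat : Ahat.IsTotallyUnimodular) (i₀ : Fin m) (b c : Fin m → ℤ)
    (A : Matrix (Fin m) (Fin n) ℝ)
    (hA : A = Ahat + Matrix.of (fun i j => (c i : ℝ) * Ahat i₀ j))
    (k : ℕ) (hk : 0 < k) (w : Fin n → ℤ) (q r : ℤ)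
    (hqr : (∑ j, Ahat i₀ j * (w j : ℝ)) = ((q * k + r : ℤ) : ℝ))
    (hr0 : 0 ≤ r) (hrk : r ≤ (k : ℤ) - 1) :
    (fun j => (w j : ℝ)) ∈
        (k : ℝ) • convexHull ℝ
          {x : Fin n → ℝ | IsIntegerVec x ∧ ∀ i, ∑ j, A i j * x j ≤ (b i : ℝ)} ↔
      ∃ y : Fin n → ℝ,
        (∀ i, ∑ j, Ahat i j * y j ≤ (r : ℝ) * ((b i : ℝ) - ((q : ℝ) + 1) * (c i : ℝ))) ∧
        (∀ i, (∑ j, Ahat i j * (w j : ℝ)) +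
            ((k : ℝ) - (r : ℝ)) * ((q : ℝ) * (c i : ℝ) - (b i : ℝ)) ≤ ∑ j, Ahat i j * y j) ∧
        (∑ j, Ahat i₀ j * y j = (r : ℝ) * ((q : ℝ) + 1)) := by
  classical
  set S := {x : Fin n → ℝ | IsIntegerVec x ∧ ∀ i, ∑ j, A i j * x j ≤ (b i : ℝ)} with hS
  have hkR : (0:ℝ) < (k : ℝ) := by exact_mod_cast hk
  have hArow : ∀ (i : Fin m) (x : Fin n → ℝ),
      ∑ j, A i j * x j = (∑ j, Ahat i j * x j) + (c i : ℝ) * ∑ j, Ahat i₀ j * x j := by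
    intro i x
    rw [hA, Finset.mul_sum, ← Finset.sum_add_distrib]
    apply Finset.sum_congr rfl
    intro j _
    simp only [Matrix.add_apply, Matrix.of_apply]
    ring
  set M : Matrix (Fin m ⊕ Bool) (Fin n) ℝ := Matrix.of (Sum.elim (fun i => (fun j => Ahat i j))
    (fun st => if st then (fun j => Ahat i₀ j) else (fun j => -Ahat i₀ j))) with hM
  have hMtu : M.IsTotallyUnimodular := by
    apply tu_signed_rows hAhat
    rintro (i | st)
    · exact ⟨i, 1, Or.inl rfl, by ext j; simp [hM]⟩
    · cases st
      · exact ⟨i₀, -1, Or.inr rfl, by ext j; simp [hM]⟩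
      · exact ⟨i₀, 1, Or.inl rfl, by ext j; simp [hM]⟩
  have main_sub : ∀ (e : ℤ) (x₀ : Fin n → ℝ),
      (∀ i, ∑ j, Ahat i j * x₀ j ≤ (b i : ℝ) - (e : ℝ) * (c i : ℝ)) →
      (∑ j, Ahat i₀ j * x₀ j = (e : ℝ)) → x₀ ∈ convexHull ℝ S := by
    intro e x₀ hx₀ hx₀e
    set d : (Fin m ⊕ Bool) → ℤ := Sum.elim (fun i => b i - e * c i)
      (fun st => if st then e else -e) with hd
    have hnegrow : ∀ x : Fin n → ℝ, ∑ j, (-Ahat i₀ j) * x j = -∑ j, Ahat i₀ j * x j := by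
      intro x
      rw [← Finset.sum_neg_distrib]
      apply Finset.sum_congr rfl
      intro j _
      ring
    have hsys : ∀ i', ∑ j, M i' j * x₀ j ≤ ((d i' : ℤ) : ℝ) := by
      rintro (i | st)
      · have := hx₀ i
        simp only [hM, hd, Sum.elim_inl, Matrix.of_apply]
        push_cast
        linarith
      · cases st
        · show ∑ j, (-Ahat i₀ j) * x₀ j ≤ ((-e : ℤ) : ℝ)
          rw [hnegrow, hx₀e]
          push_cast
          exact le_refl _
        · show ∑ j, Ahat i₀ j * x₀ j ≤ ((e : ℤ) : ℝ)
          rw [hx₀e]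
    have hmem := hoffman_kruskal hMtu d hsys
    have hsub : {x : Fin n → ℝ | IsIntegerVec x ∧ ∀ i', ∑ j, M i' j * x j ≤ ((d i' : ℤ) : ℝ)}
        ⊆ S := by
      rintro z ⟨hzint, hzsys⟩
      refine ⟨hzint, fun i => ?_⟩
      have h1 : ∑ j, Ahat i j * z j ≤ ((b i - e * c i : ℤ) : ℝ) := hzsys (Sum.inl i)
      have h2 : ∑ j, Ahat i₀ j * z j ≤ ((e : ℤ) : ℝ) := hzsys (Sum.inr true)
      have h3 : ∑ j, (-Ahat i₀ j) * z j ≤ ((-e : ℤ) : ℝ) := hzsys (Sum.inr false)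
      rw [hnegrow] at h3
      push_cast at h1 h2 h3
      have heq : ∑ j, Ahat i₀ j * z j = (e : ℝ) := le_antisymm h2 (by linarith)
      rw [hArow, heq]
      nlinarith [h1]
    exact convexHull_mono hsub hmem
  constructor
  · -- forward direction
    intro hw
    rw [Set.mem_smul_set] at hw
    obtain ⟨z, hz, hkz⟩ := hw
    rw [hS, _root_.convexHull_eq] at hz
    obtain ⟨ι', tt, lam, xs, hlam0, hlam1, hxs, hcm⟩ := hz
    rw [Finset.centerMass_eq_of_sum_1 _ _ hlam1] at hcm
    set μ : ι' → ℝ := fun i => (k : ℝ) * lam i with hμ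
    have hw_eq : ∀ j, ((w j : ℤ) : ℝ) = ∑ i ∈ tt, μ i * xs i j := by
      intro j
      have h1 := congrFun hkz j
      simp only [Pi.smul_apply, smul_eq_mul] at h1
      have h2 : z j = ∑ i ∈ tt, lam i * xs i j := by
        rw [← hcm]
        rw [Finset.sum_apply]
        apply Finset.sum_congr rfl
        intro i _
        simp
      rw [← h1, h2, Finset.mul_sum]
      apply Finset.sum_congr rfl
      intro i _
      simp only [hμ]
      ring
    -- integrality of the a-values
    have haint : ∀ j, ∃ zz : ℤ, Ahat i₀ j = (zz : ℝ) := fun j => tu_entries_int hAhat i₀ j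
    have hint : ∀ i ∈ tt, ∃ zz : ℤ, (∑ j, Ahat i₀ j * xs i j) = (zz : ℝ) := by
      intro i hi
      choose za hza using haint
      choose zx hzx using (hxs i hi).1
      refine ⟨∑ j, za j * zx j, ?_⟩
      push_cast
      apply Finset.sum_congr rfl
      intro j _
      rw [hza j, hzx j]
    set s : ι' → ℤ := fun i => if h : i ∈ tt then Classical.choose (hint i h) else 0 with hsdef
    have hs : ∀ i ∈ tt, (∑ j, Ahat i₀ j * xs i j) = ((s i : ℤ) : ℝ) := by
      intro i hi
      simp only [hsdef, dif_pos hi]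
      exact Classical.choose_spec (hint i hi)
    -- hypotheses of exists_nu
    have hμ0 : ∀ i ∈ tt, 0 ≤ μ i := fun i hi => mul_nonneg hkR.le (hlam0 i hi)
    have hμk : ∑ i ∈ tt, μ i = (k : ℝ) := by
      rw [hμ, ← Finset.mul_sum, hlam1, mul_one]
    have hrowswap : ∀ (g : Fin n → ℝ) (coef : ι' → ℝ),
        ∑ j, g j * (∑ i ∈ tt, coef i * xs i j)
          = ∑ i ∈ tt, coef i * (∑ j, g j * xs i j) := by
      intro g coef
      have h1 : ∀ j, g j * (∑ i ∈ tt, coef i * xs i j)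
          = ∑ i ∈ tt, coef i * (g j * xs i j) := by
        intro j
        rw [Finset.mul_sum]
        apply Finset.sum_congr rfl
        intro i _
        ring
      rw [Finset.sum_congr rfl (fun j _ => h1 j), Finset.sum_comm]
      apply Finset.sum_congr rfl
      intro i _
      rw [Finset.mul_sum]
    have hμs : ∑ i ∈ tt, μ i * ((s i : ℤ) : ℝ) = (q : ℝ) * k + r := by
      have h1 : (∑ j, Ahat i₀ j * ((w j : ℤ) : ℝ)) = ∑ i ∈ tt, μ i * ((s i : ℤ) : ℝ) := by
        rw [Finset.sum_congr rfl (fun j _ => by rw [hw_eq j]), hrowswap]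
        apply Finset.sum_congr rfl
        intro i hi
        rw [hs i hi]
      rw [← h1, hqr]
      push_cast
      ring
    obtain ⟨ν, hνb, hνsum, hνval⟩ := exists_nu tt μ s k q r hμ0 hμk hμs hk hr0 hrk
    refine ⟨fun j => ∑ i ∈ tt, ν i * xs i j, ?_, ?_, ?_⟩
    · -- first system
      intro ℓ
      rw [hrowswap]
      have hterm : ∀ i ∈ tt, ν i * (∑ j, Ahat ℓ j * xs i j)
          ≤ ν i * ((b ℓ : ℝ) - (c ℓ : ℝ) * ((s i : ℤ) : ℝ)) := by
        intro i hi
        apply mul_le_mul_of_nonneg_left _ (hνb i hi).1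
        have h2 := (hxs i hi).2 ℓ
        rw [hArow, hs i hi] at h2
        linarith
      calc ∑ i ∈ tt, ν i * (∑ j, Ahat ℓ j * xs i j)
          ≤ ∑ i ∈ tt, ν i * ((b ℓ : ℝ) - (c ℓ : ℝ) * ((s i : ℤ) : ℝ)) :=
            Finset.sum_le_sum hterm
      _ = (b ℓ : ℝ) * (∑ i ∈ tt, ν i) - (c ℓ : ℝ) * ∑ i ∈ tt, ν i * ((s i : ℤ) : ℝ) := by
            rw [Finset.mul_sum, Finset.mul_sum, ← Finset.sum_sub_distrib]
            apply Finset.sum_congr rfl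
            intro i _
            ring
      _ = (r : ℝ) * ((b ℓ : ℝ) - ((q : ℝ) + 1) * (c ℓ : ℝ)) := by
            rw [hνsum, hνval]
            ring
    · -- second system
      intro ℓ
      have hwrow : (∑ j, Ahat ℓ j * ((w j : ℤ) : ℝ))
          = ∑ i ∈ tt, μ i * (∑ j, Ahat ℓ j * xs i j) := by
        rw [Finset.sum_congr rfl (fun j _ => by rw [hw_eq j]), hrowswap]
      have hyrow : (∑ j, Ahat ℓ j * (∑ i ∈ tt, ν i * xs i j))
          = ∑ i ∈ tt, ν i * (∑ j, Ahat ℓ j * xs i j) := hrowswap _ _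
      have hterm : ∀ i ∈ tt, (μ i - ν i) * (∑ j, Ahat ℓ j * xs i j)
          ≤ (μ i - ν i) * ((b ℓ : ℝ) - (c ℓ : ℝ) * ((s i : ℤ) : ℝ)) := by
        intro i hi
        apply mul_le_mul_of_nonneg_left _ (by linarith [(hνb i hi).2] : 0 ≤ μ i - ν i)
        have h2 := (hxs i hi).2 ℓ
        rw [hArow, hs i hi] at h2
        linarith
      have hdiff : (∑ j, Ahat ℓ j * ((w j : ℤ) : ℝ)) - (∑ j, Ahat ℓ j * (∑ i ∈ tt, ν i * xs i j))
          ≤ (b ℓ : ℝ) * ((k : ℝ) - (r : ℝ))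
            - (c ℓ : ℝ) * (((q : ℝ) * k + r) - (r : ℝ) * ((q : ℝ) + 1)) := by
        rw [hwrow, hyrow, ← Finset.sum_sub_distrib]
        calc ∑ i ∈ tt, (μ i * (∑ j, Ahat ℓ j * xs i j) - ν i * (∑ j, Ahat ℓ j * xs i j))
            = ∑ i ∈ tt, (μ i - ν i) * (∑ j, Ahat ℓ j * xs i j) := by
              apply Finset.sum_congr rfl
              intro i _
              ring
        _ ≤ ∑ i ∈ tt, (μ i - ν i) * ((b ℓ : ℝ) - (c ℓ : ℝ) * ((s i : ℤ) : ℝ)) :=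
              Finset.sum_le_sum hterm
        _ = (b ℓ : ℝ) * ((∑ i ∈ tt, μ i) - ∑ i ∈ tt, ν i)
              - (c ℓ : ℝ) * ((∑ i ∈ tt, μ i * ((s i : ℤ) : ℝ)) - ∑ i ∈ tt, ν i * ((s i : ℤ) : ℝ)) := by
              rw [← Finset.sum_sub_distrib, ← Finset.sum_sub_distrib, Finset.mul_sum,
                Finset.mul_sum, ← Finset.sum_sub_distrib]
              apply Finset.sum_congr rfl
              intro i _
              ring
        _ = (b ℓ : ℝ) * ((k : ℝ) - (r : ℝ))
              - (c ℓ : ℝ) * (((q : ℝ) * k + r) - (r : ℝ) * ((q : ℝ) + 1)) := by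
              rw [hμk, hνsum, hμs, hνval]
      nlinarith [hdiff]
    · -- equality row
      rw [hrowswap]
      have : ∑ i ∈ tt, ν i * (∑ j, Ahat i₀ j * xs i j) = ∑ i ∈ tt, ν i * ((s i : ℤ) : ℝ) := by
        apply Finset.sum_congr rfl
        intro i hi
        rw [hs i hi]
      rw [this, hνval]
  · -- reverse direction
    rintro ⟨y, hy1, hy2, hy3⟩
    by_cases hr : r = 0
    · subst hr
      simp only [Int.cast_zero, zero_mul, sub_zero] at hy1 hy2 hy3
      set x₀ : Fin n → ℝ := fun j => (1 / (k : ℝ)) * ((w j : ℤ) : ℝ) with hx₀def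
      have hx₀row : ∀ i, ∑ j, Ahat i j * x₀ j = (1 / (k : ℝ)) * ∑ j, Ahat i j * ((w j : ℤ) : ℝ) := by
        intro i
        rw [Finset.mul_sum]
        apply Finset.sum_congr rfl
        intro j _
        simp only [hx₀def]
        ring
      have hmem : x₀ ∈ convexHull ℝ S := by
        apply main_sub q
        · intro i
          rw [hx₀row]
          have h1 := hy1 i
          have h2 := hy2 i
          rw [div_mul_eq_mul_div, one_mul, div_le_iff₀ hkR]
          nlinarith [hy1 i, hy2 i]
        · rw [hx₀row i₀, hqr]
          push_cast
          field_simp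
          ring
      rw [Set.mem_smul_set]
      refine ⟨x₀, hmem, ?_⟩
      funext j
      simp only [Pi.smul_apply, smul_eq_mul, hx₀def]
      field_simp
    · have hrpos : (0 : ℝ) < (r : ℝ) := by
        have : 0 < r := lt_of_le_of_ne hr0 (Ne.symm hr)
        exact_mod_cast this
      have hkrpos : (0 : ℝ) < (k : ℝ) - (r : ℝ) := by
        have : ((r : ℤ) : ℝ) ≤ (((k : ℤ) - 1 : ℤ) : ℝ) := by exact_mod_cast hrk
        push_cast at this
        linarith
      set p : Fin n → ℝ := fun j => (1 / (r : ℝ)) * y j with hpdef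
      set p' : Fin n → ℝ := fun j => (1 / ((k : ℝ) - (r : ℝ))) * (((w j : ℤ) : ℝ) - y j) with hp'def
      have hprow : ∀ i, ∑ j, Ahat i j * p j = (1 / (r : ℝ)) * ∑ j, Ahat i j * y j := by
        intro i
        rw [Finset.mul_sum]
        apply Finset.sum_congr rfl
        intro j _
        simp only [hpdef]
        ring
      have hp'row : ∀ i, ∑ j, Ahat i j * p' j
          = (1 / ((k : ℝ) - (r : ℝ))) * ((∑ j, Ahat i j * ((w j : ℤ) : ℝ)) - ∑ j, Ahat i j * y j) := by
        intro i
        rw [← Finset.sum_sub_distrib, Finset.mul_sum]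
        apply Finset.sum_congr rfl
        intro j _
        simp only [hp'def]
        ring
      have hpmem : p ∈ convexHull ℝ S := by
        apply main_sub (q + 1)
        · intro i
          rw [hprow]
          rw [div_mul_eq_mul_div, one_mul, div_le_iff₀ hrpos]
          have := hy1 i
          push_cast
          nlinarith [hy1 i]
        · rw [hprow i₀, hy3]
          push_cast
          field_simp
      have hp'mem : p' ∈ convexHull ℝ S := by
        apply main_sub q
        · intro i
          rw [hp'row]
          rw [div_mul_eq_mul_div, one_mul, div_le_iff₀ hkrpos]
          nlinarith [hy2 i]
        · rw [hp'row i₀, hqr, hy3]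
          push_cast
          field_simp
          ring
      have hcomb : ((r : ℝ) / k) • p + (((k : ℝ) - r) / k) • p' ∈ convexHull ℝ S := by
        apply (convex_convexHull ℝ S) hpmem hp'mem
        · positivity
        · positivity
        · field_simp
          ring
      rw [Set.mem_smul_set]
      refine ⟨_, hcomb, ?_⟩
      funext j
      simp only [Pi.add_apply, Pi.smul_apply, smul_eq_mul, hpdef, hp'def]
      have hrne : (r : ℝ) ≠ 0 := ne_of_gt hrpos
      have hkrne : (k : ℝ) - (r : ℝ) ≠ 0 := ne_of_gt hkrpos
      have hkne : (k : ℝ) ≠ 0 := ne_of_gt hkR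
      field_simp
      ring
end

section
/- Let E be a finite set, let f : 2^E → ℤ be submodular and let g : 2^E → ℤ be supermodular. Then the polyhedron {x ∈ ℝ^E | g(U) ≤ x(U) ≤ f(U) for all U ⊆ E} is box-integer. -/
open Finset Pointwise

variable {ι : Type*} [Fintype ι]

/-- A function on subsets of a finite set is submodular. -/
def Submodular {E : Type*} [DecidableEq E] (f : Finset E → ℤ) : Prop :=
  ∀ A B : Finset E, f (A ∪ B) + f (A ∩ B) ≤ f A + f B

section AuxiliaryLemmas
open scoped Classical
variable {E : Type*} [Fintype E] [DecidableEq E]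

/-- A real number is an integer. -/
def IsIntR (r : ℝ) : Prop := ∃ k : ℤ, r = (k : ℝ)

lemma IsIntR.sub {a b : ℝ} (ha : IsIntR a) (hb : IsIntR b) : IsIntR (a - b) := by
  obtain ⟨k, rfl⟩ := ha; obtain ⟨l, rfl⟩ := hb; exact ⟨k - l, by push_cast; ring⟩

lemma IsIntR.add {a b : ℝ} (ha : IsIntR a) (hb : IsIntR b) : IsIntR (a + b) := by
  obtain ⟨k, rfl⟩ := ha; obtain ⟨l, rfl⟩ := hb; exact ⟨k + l, by push_cast; ring⟩

lemma isIntR_sum {α : Type*} (T : Finset α) (x : α → ℝ) (h : ∀ e ∈ T, IsIntR (x e)) :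
    IsIntR (∑ e ∈ T, x e) := by
  classical
  induction T using Finset.induction_on with
  | empty => exact ⟨0, by simp⟩
  | @insert a s hnot ih =>
    rw [Finset.sum_insert hnot]
    exact (h a (mem_insert_self a s)).add (ih fun e he => h e (mem_insert_of_mem he))



lemma chainSpan (L : Finset (Finset E))
    (hUcl : ∀ A ∈ L, ∀ B ∈ L, A ∪ B ∈ L) (hIcl : ∀ A ∈ L, ∀ B ∈ L, A ∩ B ∈ L) :
    ∃ C : Finset (Finset E), C ⊆ L ∧ (∀ A ∈ C, ∀ B ∈ C, A ⊆ B ∨ B ⊆ A) ∧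
      ∀ z : E → ℝ, (∀ V ∈ C, ∑ e ∈ V, z e = 0) → ∀ U ∈ L, ∑ e ∈ U, z e = 0 := by
  classical
  set Chains : Finset (Finset (Finset E)) :=
    L.powerset.filter (fun C => ∀ A ∈ C, ∀ B ∈ C, A ⊆ B ∨ B ⊆ A) with hChains
  have hne : Chains.Nonempty := ⟨∅, by simp [hChains]⟩
  obtain ⟨C, hCmem, hCmax⟩ := Finset.exists_max_image Chains Finset.card hne
  rw [hChains, Finset.mem_filter, Finset.mem_powerset] at hCmem
  obtain ⟨hCL, hchain⟩ := hCmem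
  refine ⟨C, hCL, hchain, ?_⟩
  intro z hz
  -- maximality: any W ∈ L comparable to all of C lies in C
  have P1 : ∀ W ∈ L, (∀ V ∈ C, V ⊆ W ∨ W ⊆ V) → W ∈ C := by
    intro W hWL hcomp
    by_contra hWC
    have hins : insert W C ∈ Chains := by
      rw [hChains, Finset.mem_filter, Finset.mem_powerset]
      constructor
      · intro A hA
        rcases Finset.mem_insert.1 hA with rfl | hA
        · exact hWL
        · exact hCL hA
      · intro A hA B hB
        rcases Finset.mem_insert.1 hA with hA1 | hA1
        · rcases Finset.mem_insert.1 hB with hB1 | hB1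
          · subst hA1; subst hB1; exact Or.inl subset_rfl
          · subst hA1
            rcases hcomp B hB1 with h | h
            · exact Or.inr h
            · exact Or.inl h
        · rcases Finset.mem_insert.1 hB with hB1 | hB1
          · subst hB1; exact hcomp A hA1
          · exact hchain A hA1 B hB1
    have := hCmax _ hins
    rw [Finset.card_insert_of_notMem hWC] at this
    omega
  -- strong induction on the number of chain members not contained in U
  have main : ∀ n : ℕ, ∀ U ∈ L, (C.filter fun V => ¬ V ⊆ U).card ≤ n → ∑ e ∈ U, z e = 0 := by
    intro n
    induction n with
    | zero =>
      intro U hUL hcard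
      have hfe : (C.filter fun V => ¬ V ⊆ U) = ∅ := Finset.card_eq_zero.1 (le_antisymm hcard (Nat.zero_le _))
      have hUC : U ∈ C := by
        apply P1 U hUL
        intro V hV
        left
        by_contra h
        have : V ∈ C.filter fun V => ¬ V ⊆ U := Finset.mem_filter.2 ⟨hV, h⟩
        simp [hfe] at this
      exact hz U hUC
    | succ n ih =>
      intro U hUL hcard
      set T := C.filter (fun V => ¬ V ⊆ U) with hT
      rcases Finset.eq_empty_or_nonempty T with hTe | hTne
      · refine ih U hUL ?_
        rw [← hT, hTe]
        simp
      obtain ⟨C', hC'T, hC'min⟩ : ∃ m ∈ T, ∀ x ∈ T, ¬ x < m := by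
        obtain ⟨m, hm⟩ := Finset.exists_minimal hTne
        exact ⟨m, hm.1, fun x hx hlt => lt_irrefl _ (lt_of_lt_of_le hlt (hm.2 hx hlt.le))⟩
      have hC'C : C' ∈ C := (Finset.mem_filter.1 hC'T).1
      have hC'nU : ¬ C' ⊆ U := (Finset.mem_filter.1 hC'T).2
      have hminall : ∀ V ∈ T, C' ⊆ V := by
        intro V hV
        have hVC : V ∈ C := (Finset.mem_filter.1 hV).1
        rcases hchain V hVC C' hC'C with h | h
        · rcases eq_or_ne V C' with rfl | hne
          · exact subset_rfl
          · exact absurd (Finset.ssubset_iff_subset_ne.2 ⟨h, hne⟩) (hC'min V hV)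
        · exact h
      -- M = U ∩ C' is in C
      have hML : U ∩ C' ∈ L := hIcl U hUL C' (hCL hC'C)
      have hMC : U ∩ C' ∈ C := by
        apply P1 _ hML
        intro V hV
        by_cases hVU : V ⊆ U
        · left
          have hVC' : V ⊆ C' := by
            rcases hchain V hV C' hC'C with h | h
            · exact h
            · exfalso; exact hC'nU (h.trans hVU)
          exact Finset.subset_inter hVU hVC'
        · right
          exact (Finset.inter_subset_right).trans (hminall V (Finset.mem_filter.2 ⟨hV, hVU⟩))
      -- recurse on U ∪ C'
      have hUL' : U ∪ C' ∈ L := hUcl U hUL C' (hCL hC'C)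
      have hsub : (C.filter fun V => ¬ V ⊆ U ∪ C') ⊆ T.erase C' := by
        intro V hV
        rw [Finset.mem_filter] at hV
        refine Finset.mem_erase.2 ⟨?_, Finset.mem_filter.2 ⟨hV.1, fun h => hV.2 (h.trans Finset.subset_union_left)⟩⟩
        rintro rfl
        exact hV.2 Finset.subset_union_right
      have hcard' : (C.filter fun V => ¬ V ⊆ U ∪ C').card ≤ n := by
        have h1 := Finset.card_le_card hsub
        have h2 : (T.erase C').card < T.card := Finset.card_erase_lt_of_mem hC'T
        omega
      have hU' : ∑ e ∈ U ∪ C', z e = 0 := ih _ hUL' hcard'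
      have hsum := Finset.sum_union_inter (s₁ := U) (s₂ := C') (f := z)
      have h1 : ∑ e ∈ U ∩ C', z e = 0 := hz _ hMC
      have h2 : ∑ e ∈ C', z e = 0 := hz _ hC'C
      -- hsum : ∑ U∪C' + ∑ U∩C' = ∑ U + ∑ C'
      linarith [hsum]
  exact fun U hUL => main _ U hUL le_rfl


lemma card_le_of_inj (S : Finset E) (κ : Type*) [Fintype κ] (Φ : κ → Finset E)
    (hker : ∀ z : E → ℝ, (∀ e, e ∉ S → z e = 0) → (∀ k, ∑ e ∈ Φ k, z e = 0) → z = 0) :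
    S.card ≤ Fintype.card κ := by
  classical
  -- extension of a function on ↥S by zero
  let ext : (↥S → ℝ) →ₗ[ℝ] (E → ℝ) :=
    { toFun := fun z e => if h : e ∈ S then z ⟨e, h⟩ else 0
      map_add' := by
        intro a b; funext e; by_cases h : e ∈ S <;> simp [h]
      map_smul' := by
        intro m a; funext e; by_cases h : e ∈ S <;> simp [h] }
  let sumOn : Finset E → ((E → ℝ) →ₗ[ℝ] ℝ) := fun P =>
    { toFun := fun y => ∑ e ∈ P, y e
      map_add' := by intro a b; simp [Finset.sum_add_distrib]
      map_smul' := by intro m a; simp [Finset.mul_sum] }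
  let L : (↥S → ℝ) →ₗ[ℝ] (κ → ℝ) := LinearMap.pi fun k => (sumOn (Φ k)).comp ext
  have hinj : Function.Injective L := by
    rw [← LinearMap.ker_eq_bot, LinearMap.ker_eq_bot']
    intro z hz
    have h1 : ∀ e, e ∉ S → ext z e = 0 := by
      intro e he; simp only [ext, LinearMap.coe_mk, AddHom.coe_mk]; rw [dif_neg he]
    have h2 : ∀ k, ∑ e ∈ Φ k, ext z e = 0 := by
      intro k
      have := congrFun hz k
      simpa [L, sumOn] using this
    have h3 := hker (ext z) h1 h2
    funext s
    have := congrFun h3 s.1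
    simpa [ext, s.2] using this
  have h4 := LinearMap.finrank_le_finrank_of_injective hinj
  rwa [Module.finrank_fintype_fun_eq_card, Module.finrank_fintype_fun_eq_card,
    Fintype.card_coe] at h4


lemma lemZ : ∀ n : ℕ, ∀ (S : Finset E) (x : E → ℝ) (π ρ : Finset (Finset E)),
    S.card ≤ n →
    (∀ P ∈ π, P.Nonempty ∧ P ⊆ S) → (∀ P ∈ ρ, P.Nonempty ∧ P ⊆ S) →
    (∀ P ∈ π, ∀ P' ∈ π, P ≠ P' → Disjoint P P') →
    (∀ P ∈ ρ, ∀ P' ∈ ρ, P ≠ P' → Disjoint P P') →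
    (∀ P ∈ π, IsIntR (∑ e ∈ P, x e)) → (∀ P ∈ ρ, IsIntR (∑ e ∈ P, x e)) →
    (∀ z : E → ℝ, (∀ e, e ∉ S → z e = 0) → (∀ P ∈ π, ∑ e ∈ P, z e = 0) →
      (∀ P ∈ ρ, ∑ e ∈ P, z e = 0) → z = 0) →
    ∀ e ∈ S, IsIntR (x e) := by
  classical
  intro n
  induction n with
  | zero =>
    intro S x π ρ hcard _ _ _ _ _ _ _ e he
    rw [Nat.le_zero, Finset.card_eq_zero] at hcard
    simp [hcard] at he
  | succ n ih =>
    intro S x π ρ hcard hπS hρS hπd hρd hπx hρx hker e he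
    -- find a singleton part
    by_cases hsing : (∃ P ∈ π, ∃ s, P = {s}) ∨ (∃ P ∈ ρ, ∃ s, P = {s})
    · -- extract the singleton {s}
      have hs : ∃ s : E, s ∈ S ∧ IsIntR (x s) := by
        rcases hsing with ⟨P, hP, s, rfl⟩ | ⟨P, hP, s, rfl⟩
        · refine ⟨s, (hπS _ hP).2 (Finset.mem_singleton_self s), ?_⟩
          have := hπx _ hP
          simpa using this
        · refine ⟨s, (hρS _ hP).2 (Finset.mem_singleton_self s), ?_⟩
          have := hρx _ hP
          simpa using this
      obtain ⟨s, hsS, hsInt⟩ := hs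
      rcases eq_or_ne e s with rfl | hes
      · exact hsInt
      -- recurse on S.erase s
      have herase : ∀ (σ : Finset (Finset E)),
          (∀ P ∈ σ, P.Nonempty ∧ P ⊆ S) →
          (∀ P ∈ σ, ∀ P' ∈ σ, P ≠ P' → Disjoint P P') →
          (∀ P ∈ σ, IsIntR (∑ e' ∈ P, x e')) →
          (∀ P ∈ (σ.image (fun P => P.erase s)).filter (fun P => P.Nonempty),
              P.Nonempty ∧ P ⊆ S.erase s) ∧
          (∀ P ∈ (σ.image (fun P => P.erase s)).filter (fun P => P.Nonempty),
            ∀ P' ∈ (σ.image (fun P => P.erase s)).filter (fun P => P.Nonempty),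
              P ≠ P' → Disjoint P P') ∧
          (∀ P ∈ (σ.image (fun P => P.erase s)).filter (fun P => P.Nonempty),
              IsIntR (∑ e' ∈ P, x e')) := by
        intro σ hσS hσd hσx
        refine ⟨?_, ?_, ?_⟩
        · intro P hP
          rw [Finset.mem_filter, Finset.mem_image] at hP
          obtain ⟨⟨Q, hQ, rfl⟩, hPne⟩ := hP
          refine ⟨hPne, ?_⟩
          intro a ha
          rw [Finset.mem_erase] at ha ⊢
          exact ⟨ha.1, (hσS Q hQ).2 ha.2⟩
        · intro P hP P' hP' hPP'
          rw [Finset.mem_filter, Finset.mem_image] at hP hP'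
          obtain ⟨⟨Q, hQ, rfl⟩, _⟩ := hP
          obtain ⟨⟨Q', hQ', rfl⟩, _⟩ := hP'
          have hQQ' : Q ≠ Q' := fun h => hPP' (by rw [h])
          exact Finset.disjoint_of_subset_left (Finset.erase_subset s Q)
            (Finset.disjoint_of_subset_right (Finset.erase_subset s Q') (hσd Q hQ Q' hQ' hQQ'))
        · intro P hP
          rw [Finset.mem_filter, Finset.mem_image] at hP
          obtain ⟨⟨Q, hQ, rfl⟩, _⟩ := hP
          by_cases hsQ : s ∈ Q
          · have hsum := Finset.sum_erase_add Q x hsQ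
            have : ∑ e' ∈ Q.erase s, x e' = (∑ e' ∈ Q, x e') - x s := by linarith
            rw [this]
            exact (hσx Q hQ).sub hsInt
          · rw [Finset.erase_eq_of_notMem hsQ]
            exact hσx Q hQ
      obtain ⟨hπS', hπd', hπx'⟩ := herase π hπS hπd hπx
      obtain ⟨hρS', hρd', hρx'⟩ := herase ρ hρS hρd hρx
      have hker' : ∀ z : E → ℝ, (∀ e', e' ∉ S.erase s → z e' = 0) →
          (∀ P ∈ (π.image (fun P => P.erase s)).filter (fun P => P.Nonempty), ∑ e' ∈ P, z e' = 0) →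
          (∀ P ∈ (ρ.image (fun P => P.erase s)).filter (fun P => P.Nonempty), ∑ e' ∈ P, z e' = 0) →
          z = 0 := by
        intro z hsupp hπz hρz
        have hzs : z s = 0 := hsupp s (by simp)
        have key : ∀ (σ : Finset (Finset E)),
            (∀ P ∈ (σ.image (fun P => P.erase s)).filter (fun P => P.Nonempty), ∑ e' ∈ P, z e' = 0) →
            ∀ P ∈ σ, ∑ e' ∈ P, z e' = 0 := by
          intro σ hσz P hP
          have h1 : ∑ e' ∈ P.erase s, z e' = 0 := by
            rcases Finset.eq_empty_or_nonempty (P.erase s) with h | h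
            · simp [h]
            · exact hσz _ (Finset.mem_filter.2 ⟨Finset.mem_image.2 ⟨P, hP, rfl⟩, h⟩)
          by_cases hsP : s ∈ P
          · have := Finset.sum_erase_add P z hsP
            rw [h1, hzs, add_zero] at this
            exact this.symm
          · rwa [Finset.erase_eq_of_notMem hsP] at h1
        refine hker z ?_ (key π hπz) (key ρ hρz)
        intro e' he'
        rcases eq_or_ne e' s with rfl | hne
        · exact hzs
        · exact hsupp e' (fun h => he' (Finset.mem_of_mem_erase h))
      have hcard' : (S.erase s).card ≤ n := by
        have := Finset.card_erase_of_mem hsS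
        omega
      exact ih (S.erase s) x _ _ hcard' hπS' hρS' hπd' hρd' hπx' hρx' hker' e
        (Finset.mem_erase.2 ⟨hes, he⟩)
    · -- no singleton part: derive a contradiction
      exfalso
      push_neg at hsing
      obtain ⟨h1, h2⟩ := hsing
      have hπ2 : ∀ P ∈ π, 2 ≤ P.card := by
        intro P hP
        have hne := (hπS P hP).1
        have hne1 : P.card ≠ 1 := fun h => by
          obtain ⟨a, ha⟩ := Finset.card_eq_one.1 h; exact (h1 P hP a ha)
        have := Finset.Nonempty.card_pos hne
        omega
      have hρ2 : ∀ P ∈ ρ, 2 ≤ P.card := by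
        intro P hP
        have hne := (hρS P hP).1
        have hne1 : P.card ≠ 1 := fun h => by obtain ⟨a, ha⟩ := Finset.card_eq_one.1 h; exact (h2 P hP a ha)
        have := Finset.Nonempty.card_pos hne
        omega
      -- every element of S is covered
      have hcover : ∀ e' ∈ S, e' ∈ π.biUnion id ∨ e' ∈ ρ.biUnion id := by
        intro e' he'
        by_contra hno
        push_neg at hno
        have hz := hker (fun e'' => if e'' = e' then 1 else 0)
          (by intro e'' he''; by_cases h : e'' = e' <;> simp [h]; exact absurd (h ▸ he') he'')
          (by
            intro P hP
            rw [Finset.sum_ite_eq' P e' (fun _ => (1:ℝ))]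
            have : e' ∉ P := fun h => hno.1 (Finset.mem_biUnion.2 ⟨P, hP, h⟩)
            simp [this])
          (by
            intro P hP
            rw [Finset.sum_ite_eq' P e' (fun _ => (1:ℝ))]
            have : e' ∉ P := fun h => hno.2 (Finset.mem_biUnion.2 ⟨P, hP, h⟩)
            simp [this])
        have := congrFun hz e'
        simp at this
      have hUπS : π.biUnion id ⊆ S := by
        intro a ha; obtain ⟨P, hP, haP⟩ := Finset.mem_biUnion.1 ha; exact (hπS P hP).2 haP
      have hUρS : ρ.biUnion id ⊆ S := by
        intro a ha; obtain ⟨P, hP, haP⟩ := Finset.mem_biUnion.1 ha; exact (hρS P hP).2 haP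
      have hcardπ : 2 * π.card ≤ (π.biUnion id).card := by
        rw [Finset.card_biUnion (t := id) (fun P hP Q hQ hne => hπd P hP Q hQ hne)]
        calc 2 * π.card = ∑ _P ∈ π, 2 := by rw [Finset.sum_const, smul_eq_mul, mul_comm]
        _ ≤ ∑ P ∈ π, P.card := Finset.sum_le_sum hπ2
      have hcardρ : 2 * ρ.card ≤ (ρ.biUnion id).card := by
        rw [Finset.card_biUnion (t := id) (fun P hP Q hQ hne => hρd P hP Q hQ hne)]
        calc 2 * ρ.card = ∑ _P ∈ ρ, 2 := by rw [Finset.sum_const, smul_eq_mul, mul_comm]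
        _ ≤ ∑ P ∈ ρ, P.card := Finset.sum_le_sum hρ2
      by_cases hcov2 : π.biUnion id = S ∧ ρ.biUnion id = S
      · -- both cover S: drop one part of ρ
        obtain ⟨hcπ, hcρ⟩ := hcov2
        have hSne : S.Nonempty := ⟨e, he⟩
        have hρne : ρ.Nonempty := by
          rcases Finset.eq_empty_or_nonempty ρ with rfl | h
          · rw [Finset.biUnion_empty] at hcρ; exact absurd hcρ.symm (Finset.nonempty_iff_ne_empty.1 hSne)
          · exact h
        obtain ⟨Q₀, hQ₀⟩ := hρne
        have hbound := card_le_of_inj S (↥π ⊕ ↥(ρ.erase Q₀))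
          (Sum.elim (fun P => (P : Finset E)) (fun Q => (Q : Finset E))) ?_
        · have hc1 : Fintype.card (↥π ⊕ ↥(ρ.erase Q₀)) = π.card + (ρ.card - 1) := by
            rw [Fintype.card_sum, Fintype.card_coe, Fintype.card_coe, Finset.card_erase_of_mem hQ₀]
          have hS1 : 1 ≤ S.card := hSne.card_pos
          have hρ1 : 1 ≤ ρ.card := Finset.card_pos.2 ⟨Q₀, hQ₀⟩
          rw [hc1] at hbound
          have e1 : 2 * π.card ≤ S.card := hcπ ▸ hcardπ
          have e2 : 2 * ρ.card ≤ S.card := hcρ ▸ hcardρ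
          omega
        · intro z hsupp hall
          apply hker z hsupp
          · intro P hP; exact hall (Sum.inl ⟨P, hP⟩)
          · intro Q hQ
            by_cases hQ0 : Q = Q₀
            · rw [hQ0]
              -- z(Q₀) = z(S) - ∑ over ρ.erase Q₀ , and z(S) = ∑ over π = 0
              have hzS : ∑ e' ∈ S, z e' = 0 := by
                rw [← hcπ, Finset.sum_biUnion (t := id) (fun P hP Q hQ hne => hπd P hP Q hQ hne)]
                exact Finset.sum_eq_zero (fun P hP => hall (Sum.inl ⟨P, hP⟩))
              have hzρ : ∑ Q ∈ ρ, (∑ e' ∈ Q, z e') = ∑ e' ∈ S, z e' := by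
                rw [← hcρ, Finset.sum_biUnion (t := id) (fun P hP Q hQ hne => hρd P hP Q hQ hne)]
                rfl
              have herase : ∑ Q ∈ ρ.erase Q₀, (∑ e' ∈ Q, z e') = 0 :=
                Finset.sum_eq_zero (fun Q hQ => hall (Sum.inr ⟨Q, hQ⟩))
              have := Finset.sum_erase_add ρ (fun Q => ∑ e' ∈ Q, z e') hQ₀
              rw [herase, zero_add, hzρ, hzS] at this
              exact this
            · exact hall (Sum.inr ⟨Q, Finset.mem_erase.2 ⟨hQ0, hQ⟩⟩)
      · -- one of the unions is a proper subset of S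
        have hbound := card_le_of_inj S (↥π ⊕ ↥ρ)
          (Sum.elim (fun P => (P : Finset E)) (fun Q => (Q : Finset E))) ?_
        · rw [Fintype.card_sum, Fintype.card_coe, Fintype.card_coe] at hbound
          -- counting
          have hunion : π.biUnion id ∪ ρ.biUnion id = S := by
            apply Finset.Subset.antisymm
            · exact Finset.union_subset hUπS hUρS
            · intro a ha; rcases hcover a ha with h | h
              · exact Finset.mem_union_left _ h
              · exact Finset.mem_union_right _ h
          have hsum : (π.biUnion id).card + (ρ.biUnion id).card
              = S.card + ((π.biUnion id) ∩ (ρ.biUnion id)).card := by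
            rw [← hunion, Finset.card_union_add_card_inter]
          have hinter : ((π.biUnion id) ∩ (ρ.biUnion id)).card < S.card := by
            rcases not_and_or.1 hcov2 with h | h
            · have hss : (π.biUnion id) ∩ (ρ.biUnion id) ⊂ S :=
                Finset.ssubset_of_subset_of_ssubset (Finset.inter_subset_left)
                  (Finset.ssubset_iff_subset_ne.2 ⟨hUπS, h⟩)
              exact Finset.card_lt_card hss
            · have hss : (π.biUnion id) ∩ (ρ.biUnion id) ⊂ S :=
                Finset.ssubset_of_subset_of_ssubset (Finset.inter_subset_right)
                  (Finset.ssubset_iff_subset_ne.2 ⟨hUρS, h⟩)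
              exact Finset.card_lt_card hss
          omega
        · intro z hsupp hall
          apply hker z hsupp
          · intro P hP; exact hall (Sum.inl ⟨P, hP⟩)
          · intro Q hQ; exact hall (Sum.inr ⟨Q, hQ⟩)


lemma parts_exist (S : Finset E) (x : E → ℝ) (hout : ∀ e, e ∉ S → IsIntR (x e))
    (C : Finset (Finset E)) (hchain : ∀ A ∈ C, ∀ B ∈ C, A ⊆ B ∨ B ⊆ A)
    (hCint : ∀ U ∈ C, IsIntR (∑ e ∈ U, x e)) :
    ∃ π : Finset (Finset E),
      (∀ P ∈ π, P.Nonempty ∧ P ⊆ S) ∧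
      (∀ P ∈ π, ∀ P' ∈ π, P ≠ P' → Disjoint P P') ∧
      (∀ P ∈ π, IsIntR (∑ e ∈ P, x e)) ∧
      (∀ z : E → ℝ, (∀ e, e ∉ S → z e = 0) → (∀ P ∈ π, ∑ e ∈ P, z e = 0) →
        ∀ U ∈ C, ∑ e ∈ U, z e = 0) := by
  classical
  let pred : Finset E → Finset E := fun U => (C.filter (fun V => V ⊂ U)).sup id
  let part : Finset E → Finset E := fun U => U \ pred U
  have hpredd : ∀ U, pred U = (C.filter (fun V => V ⊂ U)).sup id := fun _ => rfl
  have hpartd : ∀ U, part U = U \ pred U := fun _ => rfl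
  have predSpec : ∀ U ∈ C, pred U = ∅ ∨ (pred U ∈ C ∧ pred U ⊂ U) := by
    intro U hU
    rcases Finset.eq_empty_or_nonempty (C.filter (fun V => V ⊂ U)) with h | h
    · left; rw [hpredd]; simp [h]
    · right
      obtain ⟨M, hM, hMmax⟩ : ∃ m ∈ C.filter (fun V => V ⊂ U), ∀ x ∈ C.filter (fun V => V ⊂ U), ¬ m < x := by
        obtain ⟨m, hm⟩ := Finset.exists_maximal h
        exact ⟨m, hm.1, fun x hx hlt => lt_irrefl _ (lt_of_le_of_lt (hm.2 hx hlt.le) hlt)⟩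
      have hMC : M ∈ C := (Finset.mem_filter.1 hM).1
      have hMU : M ⊂ U := (Finset.mem_filter.1 hM).2
      have hsup : pred U = M := by
        rw [hpredd]
        apply le_antisymm
        · apply Finset.sup_le
          intro V hV
          have hVC : V ∈ C := (Finset.mem_filter.1 hV).1
          rcases hchain V hVC M hMC with hle | hle
          · exact hle
          · rcases eq_or_ne M V with rfl | hne
            · exact subset_rfl
            · exact absurd (Finset.ssubset_iff_subset_ne.2 ⟨hle, hne⟩) (hMmax V hV)
        · exact Finset.le_sup (f := id) hM
      rw [hsup]
      exact ⟨hMC, hMU⟩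
  have predSub : ∀ U, pred U ⊆ U := by
    intro U a ha
    rw [hpredd] at ha
    obtain ⟨V, hV, haV⟩ := Finset.mem_sup.1 ha
    exact (Finset.mem_filter.1 hV).2.subset haV
  have partInt : ∀ U ∈ C, IsIntR (∑ e ∈ part U, x e) := by
    intro U hU
    rcases predSpec U hU with h | ⟨hC', _⟩
    · rw [hpartd]; simp only [h, Finset.sdiff_empty]; exact hCint U hU
    · have hsum := Finset.sum_sdiff (f := x) (predSub U)
      have : ∑ e ∈ part U, x e = (∑ e ∈ U, x e) - ∑ e ∈ pred U, x e := by
        rw [hpartd]; linarith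
      rw [this]
      exact (hCint U hU).sub (hCint _ hC')
  have partDisj : ∀ U ∈ C, ∀ W ∈ C, U ≠ W → Disjoint (part U) (part W) := by
    have key : ∀ U ∈ C, ∀ W ∈ C, U ⊂ W → Disjoint (part U) (part W) := by
      intro U hU W hW hUW
      have hUpred : U ⊆ pred W := by
        intro a ha
        rw [hpredd]
        exact Finset.mem_sup.2 ⟨U, Finset.mem_filter.2 ⟨hU, hUW⟩, ha⟩
      rw [Finset.disjoint_left]
      intro a ha haW
      have haU : a ∈ U := (Finset.sdiff_subset) ha
      have : a ∈ pred W := hUpred haU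
      rw [hpartd] at haW
      exact (Finset.mem_sdiff.1 haW).2 this
    intro U hU W hW hne
    rcases hchain U hU W hW with h | h
    · exact key U hU W hW (Finset.ssubset_iff_subset_ne.2 ⟨h, hne⟩)
    · exact (key W hW U hU (Finset.ssubset_iff_subset_ne.2 ⟨h, hne.symm⟩)).symm
  -- telescope
  have telescope : ∀ z : E → ℝ, (∀ U ∈ C, ∑ e ∈ part U, z e = 0) → ∀ U ∈ C, ∑ e ∈ U, z e = 0 := by
    intro z hzparts
    have main : ∀ n : ℕ, ∀ U ∈ C, U.card ≤ n → ∑ e ∈ U, z e = 0 := by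
      intro n
      induction n with
      | zero =>
        intro U hU hcard
        rw [Nat.le_zero, Finset.card_eq_zero] at hcard
        simp [hcard]
      | succ n ih =>
        intro U hU hcard
        rcases predSpec U hU with h | ⟨hC', hss⟩
        · have := hzparts U hU
          rw [hpartd] at this
          simpa [h] using this
        · have hsum := Finset.sum_sdiff (f := z) (predSub U)
          have h1 : ∑ e ∈ part U, z e = 0 := hzparts U hU
          rw [hpartd] at h1
          have h2 : ∑ e ∈ pred U, z e = 0 := by
            apply ih _ hC'
            have := Finset.card_lt_card hss
            omega
          linarith
    exact fun U hU => main U.card U hU le_rfl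
  refine ⟨(C.image (fun U => part U ∩ S)).filter (fun P => P.Nonempty), ?_, ?_, ?_, ?_⟩
  · intro P hP
    rw [Finset.mem_filter, Finset.mem_image] at hP
    obtain ⟨⟨U, hU, rfl⟩, hne⟩ := hP
    exact ⟨hne, Finset.inter_subset_right⟩
  · intro P hP P' hP' hne
    rw [Finset.mem_filter, Finset.mem_image] at hP hP'
    obtain ⟨⟨U, hU, rfl⟩, _⟩ := hP
    obtain ⟨⟨U', hU', rfl⟩, _⟩ := hP'
    have hUU' : U ≠ U' := fun h => hne (by rw [h])
    exact Finset.disjoint_of_subset_left Finset.inter_subset_left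
      (Finset.disjoint_of_subset_right Finset.inter_subset_left (partDisj U hU U' hU' hUU'))
  · intro P hP
    rw [Finset.mem_filter, Finset.mem_image] at hP
    obtain ⟨⟨U, hU, rfl⟩, _⟩ := hP
    have hsum := Finset.sum_inter_add_sum_sdiff (part U) S x
    have : ∑ e ∈ part U ∩ S, x e = (∑ e ∈ part U, x e) - ∑ e ∈ part U \ S, x e := by linarith
    rw [this]
    exact (partInt U hU).sub (isIntR_sum _ _ (fun e he => hout e (Finset.mem_sdiff.1 he).2))
  · intro z hsupp hparts
    apply telescope
    intro U hU
    have hsum := Finset.sum_inter_add_sum_sdiff (part U) S z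
    have h2 : ∑ e ∈ part U \ S, z e = 0 :=
      Finset.sum_eq_zero (fun e he => hsupp e (Finset.mem_sdiff.1 he).2)
    have h1 : ∑ e ∈ part U ∩ S, z e = 0 := by
      rcases Finset.eq_empty_or_nonempty (part U ∩ S) with h | h
      · simp [h]
      · exact hparts _ (Finset.mem_filter.2 ⟨Finset.mem_image.2 ⟨U, hU, rfl⟩, h⟩)
    linarith


abbrev Kt (E : Type*) := (Finset E ⊕ Finset E) ⊕ (E ⊕ E)

def kval : Kt E → (E → ℝ) → ℝ
  | .inl (.inl U), x => ∑ e ∈ U, x e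
  | .inl (.inr U), x => -∑ e ∈ U, x e
  | .inr (.inl e), x => x e
  | .inr (.inr e), x => - x e

def kbnd (f g : Finset E → ℤ) (c d : E → ℤ) : Kt E → ℝ
  | .inl (.inl U) => f U
  | .inl (.inr U) => - g U
  | .inr (.inl e) => d e
  | .inr (.inr e) => - c e

lemma kval_linear (κ : Kt E) (x z : E → ℝ) (b : ℝ) :
    kval κ (x + b • z) = kval κ x + b * kval κ z := by
  rcases κ with (U | U) | (e | e) <;>
    simp [kval, Finset.sum_add_distrib, Finset.mul_sum] <;> ring

lemma move (f g : Finset E → ℤ) (c d : E → ℤ) (x z : E → ℝ)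
    (hx : ∀ κ, kval κ x ≤ kbnd f g c d κ) (hz0 : z ≠ 0)
    (htight : ∀ κ, kval κ x = kbnd f g c d κ → kval κ z = 0) :
    ∃ b : ℝ, 0 < b ∧ (∀ κ, kval κ (x + b • z) ≤ kbnd f g c d κ) ∧
      ∃ κ₀, kval κ₀ x < kbnd f g c d κ₀ ∧ kval κ₀ (x + b • z) = kbnd f g c d κ₀ := by
  classical
  set bnd := kbnd f g c d with hbnd
  have hKne : (Finset.univ.filter (fun κ : Kt E => 0 < kval κ z)).Nonempty := by
    obtain ⟨e, he⟩ := Function.ne_iff.1 hz0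
    rcases lt_or_gt_of_ne (show z e ≠ 0 by simpa using he) with h | h
    · exact ⟨Sum.inr (Sum.inr e), Finset.mem_filter.2 ⟨Finset.mem_univ _, by simpa [kval] using h⟩⟩
    · exact ⟨Sum.inr (Sum.inl e), Finset.mem_filter.2 ⟨Finset.mem_univ _, by simpa [kval] using h⟩⟩
  set Kp := Finset.univ.filter (fun κ : Kt E => 0 < kval κ z) with hKp
  have hslack : ∀ κ ∈ Kp, kval κ x < bnd κ := by
    intro κ hκ
    have hpos : 0 < kval κ z := (Finset.mem_filter.1 hκ).2
    rcases lt_or_eq_of_le (hx κ) with h | h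
    · exact h
    · exact absurd (htight κ h) (ne_of_gt hpos)
  set b := Kp.inf' hKne (fun κ => (bnd κ - kval κ x) / kval κ z) with hb
  have hbpos : 0 < b := by
    rw [hb]
    apply (Finset.lt_inf'_iff hKne).2
    intro κ hκ
    exact div_pos (by linarith [hslack κ hκ]) (Finset.mem_filter.1 hκ).2
  refine ⟨b, hbpos, ?_, ?_⟩
  · intro κ
    rw [kval_linear]
    by_cases hκ : 0 < kval κ z
    · have hκK : κ ∈ Kp := Finset.mem_filter.2 ⟨Finset.mem_univ _, hκ⟩
      have hble : b ≤ (bnd κ - kval κ x) / kval κ z := Finset.inf'_le _ hκK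
      have := (le_div_iff₀ hκ).1 hble
      linarith
    · push_neg at hκ
      have : b * kval κ z ≤ 0 := mul_nonpos_of_nonneg_of_nonpos (le_of_lt hbpos) hκ
      linarith [hx κ]
  · obtain ⟨κ₀, hκ₀K, hκ₀eq⟩ := Finset.exists_mem_eq_inf' hKne (fun κ => (bnd κ - kval κ x) / kval κ z)
    refine ⟨κ₀, hslack κ₀ hκ₀K, ?_⟩
    rw [kval_linear]
    have hpos : 0 < kval κ₀ z := (Finset.mem_filter.1 hκ₀K).2
    rw [← hb] at hκ₀eq
    rw [hκ₀eq]
    field_simp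
    ring


lemma kval_neg (κ : Kt E) (z : E → ℝ) : kval κ (-z) = - kval κ z := by
  rcases κ with (U | U) | (e | e) <;> simp [kval]

lemma exists_dir (f g : Finset E → ℤ) (c d : E → ℤ)
    (hf : ∀ A B, f (A ∪ B) + f (A ∩ B) ≤ f A + f B)
    (hg : ∀ A B, g A + g B ≤ g (A ∪ B) + g (A ∩ B))
    (x : E → ℝ) (hx : ∀ κ, kval κ x ≤ kbnd f g c d κ)
    (hS : (Finset.univ.filter (fun e => ¬ IsIntR (x e))).Nonempty) :
    ∃ z : E → ℝ, z ≠ 0 ∧ (∀ e, IsIntR (x e) → z e = 0) ∧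
      (∀ κ, kval κ x = kbnd f g c d κ → kval κ z = 0) := by
  classical
  set S := Finset.univ.filter (fun e => ¬ IsIntR (x e)) with hSdef
  have hmemS : ∀ e, e ∈ S ↔ ¬ IsIntR (x e) := by
    intro e; rw [hSdef, Finset.mem_filter]; simp
  by_contra hcon
  push_neg at hcon
  -- the kernel is trivial
  set Lf := Finset.univ.filter (fun U : Finset E => ∑ e ∈ U, x e = ((f U : ℤ) : ℝ)) with hLf
  set Lg := Finset.univ.filter (fun U : Finset E => ∑ e ∈ U, x e = ((g U : ℤ) : ℝ)) with hLg
  have hmemLf : ∀ U, U ∈ Lf ↔ ∑ e ∈ U, x e = ((f U : ℤ) : ℝ) := by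
    intro U; rw [hLf, Finset.mem_filter]; simp
  have hmemLg : ∀ U, U ∈ Lg ↔ ∑ e ∈ U, x e = ((g U : ℤ) : ℝ) := by
    intro U; rw [hLg, Finset.mem_filter]; simp
  have hxf : ∀ U, ∑ e ∈ U, x e ≤ ((f U : ℤ) : ℝ) := fun U => hx (.inl (.inl U))
  have hxg : ∀ U, ((g U : ℤ) : ℝ) ≤ ∑ e ∈ U, x e := by
    intro U
    have := hx (.inl (.inr U))
    simp only [kval, kbnd] at this
    linarith
  have hker : ∀ z : E → ℝ, (∀ e, e ∉ S → z e = 0) → (∀ U ∈ Lf, ∑ e ∈ U, z e = 0) →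
      (∀ U ∈ Lg, ∑ e ∈ U, z e = 0) → z = 0 := by
    intro z hsupp hzf hzg
    by_contra hz0
    obtain ⟨κ, hκ, hκne⟩ := hcon z hz0 (fun e he => hsupp e (fun hmem => ((hmemS e).1 hmem) he))
    apply hκne
    rcases κ with (U | U) | (e | e)
    · exact hzf U ((hmemLf U).2 (by simpa [kval, kbnd] using hκ))
    · have : ∑ e ∈ U, x e = ((g U : ℤ) : ℝ) := by
        simp only [kval, kbnd] at hκ; linarith
      have := hzg U ((hmemLg U).2 this)
      simp only [kval]; linarith
    · have : IsIntR (x e) := ⟨d e, by simpa [kval, kbnd] using hκ⟩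
      simp only [kval]
      exact hsupp e (fun hmem => ((hmemS e).1 hmem) this)
    · have hxe : x e = ((c e : ℤ) : ℝ) := by simp only [kval, kbnd] at hκ; linarith
      have : IsIntR (x e) := ⟨c e, hxe⟩
      simp only [kval]
      rw [hsupp e (fun hmem => ((hmemS e).1 hmem) this)]
      ring
  -- closure of the tight families
  have hLfU : ∀ A ∈ Lf, ∀ B ∈ Lf, A ∪ B ∈ Lf := by
    intro A hA B hB
    have hA' := (hmemLf A).1 hA
    have hB' := (hmemLf B).1 hB
    have hsum := Finset.sum_union_inter (s₁ := A) (s₂ := B) (f := x)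
    have hsub : ((f (A ∪ B) : ℤ) : ℝ) + ((f (A ∩ B) : ℤ) : ℝ) ≤ ((f A : ℤ) : ℝ) + ((f B : ℤ) : ℝ) := by
      exact_mod_cast hf A B
    have h1 := hxf (A ∪ B)
    have h2 := hxf (A ∩ B)
    exact (hmemLf _).2 (by linarith)
  have hLfI : ∀ A ∈ Lf, ∀ B ∈ Lf, A ∩ B ∈ Lf := by
    intro A hA B hB
    have hA' := (hmemLf A).1 hA
    have hB' := (hmemLf B).1 hB
    have hsum := Finset.sum_union_inter (s₁ := A) (s₂ := B) (f := x)
    have hsub : ((f (A ∪ B) : ℤ) : ℝ) + ((f (A ∩ B) : ℤ) : ℝ) ≤ ((f A : ℤ) : ℝ) + ((f B : ℤ) : ℝ) := by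
      exact_mod_cast hf A B
    have h1 := hxf (A ∪ B)
    have h2 := hxf (A ∩ B)
    exact (hmemLf _).2 (by linarith)
  have hLgU : ∀ A ∈ Lg, ∀ B ∈ Lg, A ∪ B ∈ Lg := by
    intro A hA B hB
    have hA' := (hmemLg A).1 hA
    have hB' := (hmemLg B).1 hB
    have hsum := Finset.sum_union_inter (s₁ := A) (s₂ := B) (f := x)
    have hsub : ((g A : ℤ) : ℝ) + ((g B : ℤ) : ℝ) ≤ ((g (A ∪ B) : ℤ) : ℝ) + ((g (A ∩ B) : ℤ) : ℝ) := by
      exact_mod_cast hg A B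
    have h1 := hxg (A ∪ B)
    have h2 := hxg (A ∩ B)
    exact (hmemLg _).2 (by linarith)
  have hLgI : ∀ A ∈ Lg, ∀ B ∈ Lg, A ∩ B ∈ Lg := by
    intro A hA B hB
    have hA' := (hmemLg A).1 hA
    have hB' := (hmemLg B).1 hB
    have hsum := Finset.sum_union_inter (s₁ := A) (s₂ := B) (f := x)
    have hsub : ((g A : ℤ) : ℝ) + ((g B : ℤ) : ℝ) ≤ ((g (A ∪ B) : ℤ) : ℝ) + ((g (A ∩ B) : ℤ) : ℝ) := by
      exact_mod_cast hg A B
    have h1 := hxg (A ∪ B)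
    have h2 := hxg (A ∩ B)
    exact (hmemLg _).2 (by linarith)
  obtain ⟨Cf, hCfL, hCfchain, hCfspan⟩ := chainSpan Lf hLfU hLfI
  obtain ⟨Cg, hCgL, hCgchain, hCgspan⟩ := chainSpan Lg hLgU hLgI
  have hout : ∀ e, e ∉ S → IsIntR (x e) := by
    intro e he
    by_contra h
    exact he ((hmemS e).2 h)
  obtain ⟨πf, hπfS, hπfd, hπfx, hπfz⟩ := parts_exist S x hout Cf hCfchain
    (fun U hU => ⟨f U, (hmemLf U).1 (hCfL hU)⟩)
  obtain ⟨πg, hπgS, hπgd, hπgx, hπgz⟩ := parts_exist S x hout Cg hCgchain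
    (fun U hU => ⟨g U, (hmemLg U).1 (hCgL hU)⟩)
  have hall := lemZ S.card S x πf πg le_rfl hπfS hπgS hπfd hπgd hπfx hπgx ?_
  · obtain ⟨e, he⟩ := hS
    have he' : e ∈ S := by rwa [hSdef]
    exact ((hmemS e).1 he') (hall e he')
  · intro z hsupp hzπf hzπg
    apply hker z hsupp
    · exact hCfspan z (hπfz z hsupp hzπf)
    · exact hCgspan z (hπgz z hsupp hzπg)

lemma main_loop (f g : Finset E → ℤ) (c d : E → ℤ)
    (hf : ∀ A B, f (A ∪ B) + f (A ∩ B) ≤ f A + f B)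
    (hg : ∀ A B, g A + g B ≤ g (A ∪ B) + g (A ∩ B)) (w : E → ℝ) :
    ∀ n : ℕ, ∀ x : E → ℝ, (∀ κ, kval κ x ≤ kbnd f g c d κ) →
    (∀ y : E → ℝ, (∀ κ, kval κ y ≤ kbnd f g c d κ) → ∑ i, w i * y i ≤ ∑ i, w i * x i) →
    (Finset.univ.filter (fun κ : Kt E => kval κ x < kbnd f g c d κ)).card ≤ n →
    ∃ y : E → ℝ, (∀ κ, kval κ y ≤ kbnd f g c d κ) ∧
      (∀ y' : E → ℝ, (∀ κ, kval κ y' ≤ kbnd f g c d κ) → ∑ i, w i * y' i ≤ ∑ i, w i * y i) ∧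
      (∀ i, IsIntR (y i)) := by
  classical
  intro n
  induction n with
  | zero =>
    intro x hx hopt hcard
    by_cases hfrac : (Finset.univ.filter (fun e => ¬ IsIntR (x e))).Nonempty
    · exfalso
      obtain ⟨z, hz0, hzsupp, hzt⟩ := exists_dir f g c d hf hg x hx hfrac
      obtain ⟨b, hb, hfeas, κ₀, hκ₀lt, hκ₀eq⟩ := move f g c d x z hx hz0 hzt
      have : κ₀ ∈ Finset.univ.filter (fun κ : Kt E => kval κ x < kbnd f g c d κ) :=
        Finset.mem_filter.2 ⟨Finset.mem_univ _, hκ₀lt⟩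
      have := Finset.card_pos.2 ⟨κ₀, this⟩
      omega
    · refine ⟨x, hx, hopt, ?_⟩
      intro i
      by_contra h
      exact hfrac ⟨i, Finset.mem_filter.2 ⟨Finset.mem_univ _, h⟩⟩
  | succ n ih =>
    intro x hx hopt hcard
    by_cases hfrac : (Finset.univ.filter (fun e => ¬ IsIntR (x e))).Nonempty
    · obtain ⟨z, hz0, hzsupp, hzt⟩ := exists_dir f g c d hf hg x hx hfrac
      have hzt' : ∀ κ, kval κ x = kbnd f g c d κ → kval κ (-z) = 0 := by
        intro κ hκ; rw [kval_neg, hzt κ hκ, neg_zero]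
      obtain ⟨b, hb, hfeas, κ₀, hκ₀lt, hκ₀eq⟩ := move f g c d x z hx hz0 hzt
      obtain ⟨b', hb', hfeas', _⟩ := move f g c d x (-z) hx (neg_ne_zero.2 hz0) hzt'
      -- dot products
      have hdot : ∀ (t : ℝ) (u : E → ℝ), ∑ i, w i * (x + t • u) i
          = (∑ i, w i * x i) + t * ∑ i, w i * u i := by
        intro t u
        rw [Finset.mul_sum, ← Finset.sum_add_distrib]
        apply Finset.sum_congr rfl
        intro i _
        simp only [Pi.add_apply, Pi.smul_apply, smul_eq_mul]
        ring
      have hD : ∑ i, w i * z i = 0 := by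
        have h1 := hopt _ hfeas
        have h2 := hopt _ hfeas'
        rw [hdot b z] at h1
        rw [hdot b' (-z)] at h2
        have hzneg : ∑ i, w i * (-z) i = - ∑ i, w i * z i := by
          rw [← Finset.sum_neg_distrib]
          apply Finset.sum_congr rfl
          intro i _
          simp
        rw [hzneg] at h2
        nlinarith
      set x' := x + b • z with hx'
      have hopt' : ∀ y : E → ℝ, (∀ κ, kval κ y ≤ kbnd f g c d κ) →
          ∑ i, w i * y i ≤ ∑ i, w i * x' i := by
        intro y hy
        rw [hx', hdot b z, hD, mul_zero, add_zero]
        exact hopt y hy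
      have hsubset : (Finset.univ.filter (fun κ : Kt E => kval κ x' < kbnd f g c d κ))
          ⊆ (Finset.univ.filter (fun κ : Kt E => kval κ x < kbnd f g c d κ)).erase κ₀ := by
        intro κ hκ
        have hκlt : kval κ x' < kbnd f g c d κ := (Finset.mem_filter.1 hκ).2
        refine Finset.mem_erase.2 ⟨?_, Finset.mem_filter.2 ⟨Finset.mem_univ _, ?_⟩⟩
        · rintro rfl
          exact absurd hκ₀eq (ne_of_lt hκlt)
        · rcases lt_or_eq_of_le (hx κ) with h | h
          · exact h
          · exfalso
            have := hzt κ h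
            rw [hx', kval_linear, this, mul_zero, add_zero, h] at hκlt
            exact lt_irrefl _ hκlt
      have hκ₀mem : κ₀ ∈ Finset.univ.filter (fun κ : Kt E => kval κ x < kbnd f g c d κ) :=
        Finset.mem_filter.2 ⟨Finset.mem_univ _, hκ₀lt⟩
      have hcard' : (Finset.univ.filter (fun κ : Kt E => kval κ x' < kbnd f g c d κ)).card ≤ n := by
        have h1 := Finset.card_le_card hsubset
        have h2 := Finset.card_erase_of_mem hκ₀mem
        have h3 := Finset.card_pos.2 ⟨κ₀, hκ₀mem⟩
        omega
      exact ih x' hfeas hopt' hcard'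
    · refine ⟨x, hx, hopt, ?_⟩
      intro i
      by_contra h
      exact hfrac ⟨i, Finset.mem_filter.2 ⟨Finset.mem_univ _, h⟩⟩


end AuxiliaryLemmas

/-- For `f` submodular and `g` supermodular, the polyhedron
`{x | g(U) ≤ x(U) ≤ f(U) for all U ⊆ E}` is box-integer. -/
theorem submodular_supermodular_boxInteger {E : Type*} [Fintype E] [DecidableEq E]
    (f g : Finset E → ℤ) (hf : Submodular f) (hg : Submodular (fun U => -g U)) :
    IsBoxInteger {x : E → ℝ |
      ∀ U : Finset E, (g U : ℝ) ≤ ∑ e ∈ U, x e ∧ ∑ e ∈ U, x e ≤ (f U : ℝ)} := by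
  intro c d hcd F hFace
  obtain ⟨⟨x₀, hx₀⟩, w, hFdef⟩ := hFace
  classical
  set B : Set (E → ℝ) := {x ∈ {x : E → ℝ |
      ∀ U : Finset E, (g U : ℝ) ≤ ∑ e ∈ U, x e ∧ ∑ e ∈ U, x e ≤ (f U : ℝ)} |
      ∀ i, (c i : ℝ) ≤ x i ∧ x i ≤ (d i : ℝ)} with hB
  have hfeas_iff : ∀ x : E → ℝ, x ∈ B ↔ ∀ κ, kval κ x ≤ kbnd f g c d κ := by
    intro x
    constructor
    · rintro ⟨h1, h2⟩ κ
      rcases κ with (U | U) | (e | e)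
      · exact (h1 U).2
      · simp only [kval, kbnd]
        have := (h1 U).1
        linarith
      · exact (h2 e).2
      · simp only [kval, kbnd]
        linarith [(h2 e).1]
    · intro h
      refine ⟨fun U => ⟨?_, h (.inl (.inl U))⟩, fun i => ⟨?_, h (.inr (.inl i))⟩⟩
      · have := h (.inl (.inr U))
        simp only [kval, kbnd] at this
        linarith
      · have := h (.inr (.inr i))
        simp only [kval, kbnd] at this
        linarith
  have hg' : ∀ A B, g A + g B ≤ g (A ∪ B) + g (A ∩ B) := by
    intro A B
    have := hg A B
    simp only at this
    omega
  rw [hFdef] at hx₀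
  obtain ⟨hx₀B, hx₀opt⟩ := hx₀
  obtain ⟨y, hyfeas, hyopt, hyint⟩ := main_loop f g c d hf hg' w
    (Finset.univ.filter (fun κ : Kt E => kval κ x₀ < kbnd f g c d κ)).card x₀
    ((hfeas_iff x₀).1 hx₀B)
    (fun y hy => hx₀opt y ((hfeas_iff y).2 hy)) le_rfl
  refine ⟨y, ?_, ?_⟩
  · rw [hFdef]
    exact ⟨(hfeas_iff y).2 hyfeas, fun y' hy' => hyopt y' ((hfeas_iff y').1 hy')⟩
  · intro i
    exact hyint i
end
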